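/- arXiv:1902.03062 — 8 statements merged into one kernel-verified Lean document; each statement's English description precedes it below -/
import Mathlib

section
/- With $u$ as in the explicit resolvent formula $u(s) = \frac{1}{\gamma(s)}\int_0^s h(y)\exp(-\int_y^s \frac{\lambda}{\gamma(z)}dz)\,dy$ and $h \in L^1(0,m)$ nonnegative with $h \not\equiv 0$, one has $u(x) > 0$ if and only if $x > \inf(\operatorname{supp} h)$; in particular $\operatorname{supp} u = [\inf \operatorname{supp} h,\, m]$. -/
open MeasureTheory Set Filter Topology

/-- For the explicit resolvent solution
`u(s) = (1/γ(s)) ∫_0^s h(y) exp(-∫_y^s λ/γ(z) dz) dy` with `0 ≤ h ∈ L¹(0,m)`,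
`h` not a.e. zero, one has `u(x) > 0` iff `x > inf supp h` (for `x ∈ [0,m]`),
where `inf supp h = sInf {x | ∫_0^x h > 0}`. -/
theorem stmt6 (m lam γ0 : ℝ) (hm : 0 < m) (hγ0 : 0 < γ0) (γ h u : ℝ → ℝ)
    (hγlip : ∃ L : NNReal, LipschitzOnWith L γ (Set.Icc 0 m))
    (hγlb : ∀ s ∈ Set.Icc 0 m, γ0 ≤ γ s)
    (hh : IntegrableOn h (Set.Ioc 0 m))
    (hhnonneg : ∀ᵐ y ∂(volume.restrict (Set.Ioc 0 m)), 0 ≤ h y)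
    (hhne : ¬ (∀ᵐ y ∂(volume.restrict (Set.Ioc 0 m)), h y = 0))
    (hu : ∀ s, u s = (γ s)⁻¹ *
      ∫ y in Set.Ioc 0 s, h y * Real.exp (-∫ z in y..s, lam / γ z)) :
    ∀ x ∈ Set.Icc 0 m,
      (0 < u x ↔ sInf {x : ℝ | 0 < ∫ y in Set.Ioc 0 x, h y} < x) := by
  obtain ⟨L, hγlip⟩ := hγlip
  have hγc : ContinuousOn γ (Icc 0 m) := hγlip.continuousOn
  have hγpos : ∀ s ∈ Icc 0 m, (0:ℝ) < γ s := fun s hs => hγ0.trans_le (hγlb s hs)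
  set f : ℝ → ℝ := fun z => lam / γ z with hfdef
  have hfc : ContinuousOn f (Icc 0 m) :=
    continuousOn_const.div hγc (fun s hs => (hγpos s hs).ne')
  have hfint : IntegrableOn f (Icc 0 m) := hfc.integrableOn_compact isCompact_Icc
  have hhintIcc : IntegrableOn h (Icc 0 m) := by
    rwa [IntegrableOn, ← Measure.restrict_congr_set Ioc_ae_eq_Icc]
  set F : ℝ → ℝ := fun r => ∫ y in Ioc 0 r, h y with hFdef
  set S : Set ℝ := {x : ℝ | 0 < ∫ y in Ioc 0 x, h y} with hSdef
  have hFc : ContinuousOn F (Icc 0 m) := intervalIntegral.continuousOn_primitive hhintIcc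
  -- the "pos iff support" lemma at each r ∈ [0,m]
  have hhnn : ∀ r, r ≤ m → ∀ᵐ y ∂(volume.restrict (Ioc 0 r)), 0 ≤ h y := fun r hr =>
    ae_restrict_of_ae_restrict_of_subset (Ioc_subset_Ioc_right hr) hhnonneg
  have hhint : ∀ r, r ≤ m → IntegrableOn h (Ioc 0 r) := fun r hr =>
    hh.mono_set (Ioc_subset_Ioc_right hr)
  have hFpos : ∀ r, r ≤ m →
      (0 < F r ↔ 0 < volume.restrict (Ioc 0 r) (Function.support h)) := fun r hr =>
    integral_pos_iff_support_of_nonneg_ae (hhnn r hr) (hhint r hr)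
  -- S is nonempty, bounded below, subset of (0,∞)
  have hSpos : S ⊆ Ioi 0 := by
    intro r hr
    by_contra hr0
    simp only [mem_Ioi, not_lt] at hr0
    simp only [hSdef, mem_setOf_eq] at hr
    rw [Ioc_eq_empty (by simpa using hr0)] at hr
    simp at hr
  have hbdd : BddBelow S := ⟨0, fun r hr => (hSpos hr).le⟩
  have hmS : m ∈ S := by
    have := (hFpos m le_rfl)
    simp only [hSdef, mem_setOf_eq]
    rw [show (∫ y in Ioc 0 m, h y) = F m from rfl, this]
    rcases eq_or_lt_of_le (show (0:ENNReal) ≤ volume.restrict (Ioc 0 m) (Function.support h) from zero_le) with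
      heq | hlt
    · exfalso
      exact hhne ((ae_iff).mpr heq.symm)
    · exact hlt
  have hSne : S.Nonempty := ⟨m, hmS⟩
  -- monotonicity: t ≤ x ≤ m → F t ≤ F x
  have hFmono : ∀ t x, t ≤ x → x ≤ m → F t ≤ F x := by
    intro t x htx hxm
    exact setIntegral_mono_set (hhint x hxm) (hhnn x hxm)
      (HasSubset.Subset.eventuallyLE (Ioc_subset_Ioc_right htx))
  -- membership iff strict inequality
  have hmem : ∀ x ∈ Icc 0 m, (x ∈ S ↔ sInf S < x) := by
    intro x hx
    constructor
    · intro hxS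
      have hx0 : 0 < x := hSpos hxS
      have hcw : ContinuousWithinAt F (Ico 0 x) x :=
        (hFc x hx).mono (fun y hy => ⟨hy.1, hy.2.le.trans hx.2⟩)
      have hne : (𝓝[Ico 0 x] x).NeBot := right_nhdsWithin_Ico_neBot hx0
      have hxS' : (0:ℝ) < F x := hxS
      have hev : ∀ᶠ y in 𝓝[Ico 0 x] x, 0 < F y :=
        hcw.eventually (eventually_gt_nhds hxS')
      obtain ⟨y, hyF, hyIco⟩ := (hev.and (eventually_mem_nhdsWithin)).exists
      exact lt_of_le_of_lt (csInf_le hbdd hyF) hyIco.2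
    · intro hlt
      obtain ⟨t, htS, htx⟩ := (csInf_lt_iff hbdd hSne).mp hlt
      exact lt_of_lt_of_le htS (hFmono t x htx.le hx.2)
  -- positivity of u
  have hupos : ∀ x ∈ Icc 0 m, (0 < u x ↔ x ∈ S) := by
    intro x hx
    rw [hu x]
    set g : ℝ → ℝ := fun y => h y * Real.exp (-∫ z in y..x, lam / γ z) with hgdef
    have hsupp : Function.support g = Function.support h := by
      ext y
      simp [hgdef, Function.mem_support, Real.exp_ne_zero]
    -- continuity of the exponential weight on Icc 0 x
    have hprim : ContinuousOn (fun y => ∫ z in Ioc 0 y, f z) (Icc 0 m) :=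
      intervalIntegral.continuousOn_primitive hfint
    have hEc : ContinuousOn (fun y => Real.exp (-∫ z in y..x, lam / γ z)) (Icc 0 x) := by
      have : ∀ y ∈ Icc 0 x, (-∫ z in y..x, lam / γ z) =
          (∫ z in Ioc 0 y, f z) - (∫ z in Ioc 0 x, f z) := by
        intro y hy
        have hyint : IntervalIntegrable f volume 0 y := by
          rw [intervalIntegrable_iff_integrableOn_Icc_of_le hy.1]
          exact hfint.mono_set (Icc_subset_Icc le_rfl (hy.2.trans hx.2))
        have hxint : IntervalIntegrable f volume 0 x := by
          rw [intervalIntegrable_iff_integrableOn_Icc_of_le hx.1]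
          exact hfint.mono_set (Icc_subset_Icc le_rfl hx.2)
        rw [← intervalIntegral.integral_of_le hy.1, ← intervalIntegral.integral_of_le hx.1,
          ← intervalIntegral.integral_interval_sub_left hxint hyint]
        ring
      have h2 : ContinuousOn (fun y => (∫ z in Ioc 0 y, f z) - (∫ z in Ioc 0 x, f z)) (Icc 0 x) :=
        (hprim.mono (Icc_subset_Icc le_rfl hx.2)).sub continuousOn_const
      refine (Real.continuous_exp.comp_continuousOn h2).congr fun y hy => ?_
      simp only [Function.comp]
      rw [this y hy]
    obtain ⟨C, hC⟩ := isCompact_Icc.exists_bound_of_continuousOn hEc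
    have hgm : AEStronglyMeasurable g (volume.restrict (Ioc 0 x)) := by
      apply AEStronglyMeasurable.mul
      · exact ((hhint x hx.2).aestronglyMeasurable)
      · exact (hEc.aestronglyMeasurable measurableSet_Icc).mono_measure
          (Measure.restrict_mono Ioc_subset_Icc_self le_rfl)
    have hgint : IntegrableOn g (Ioc 0 x) := by
      apply Integrable.mono' ((hhint x hx.2).const_mul C) hgm
      filter_upwards [hhnn x hx.2, ae_restrict_mem measurableSet_Ioc] with y hy0 hy
      have hE := hC y (Ioc_subset_Icc_self hy)
      have h1 : ‖g y‖ = h y * ‖Real.exp (-∫ z in y..x, f z)‖ := by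
        rw [hgdef]
        simp only [norm_mul, Real.norm_eq_abs (h y), abs_of_nonneg hy0]
        rfl
      rw [h1, mul_comm C]
      exact mul_le_mul_of_nonneg_left hE hy0
    have hgnn : ∀ᵐ y ∂(volume.restrict (Ioc 0 x)), 0 ≤ g y := by
      filter_upwards [hhnn x hx.2] with y hy0
      exact mul_nonneg hy0 (Real.exp_pos _).le
    have hI := integral_pos_iff_support_of_nonneg_ae hgnn hgint
    have hγx : 0 < (γ x)⁻¹ := inv_pos.mpr (hγpos x hx)
    constructor
    · intro hpos
      have : 0 < ∫ y in Ioc 0 x, g y := by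
        by_contra hnp
        push_neg at hnp
        have := mul_nonpos_of_nonneg_of_nonpos hγx.le hnp
        linarith
      rw [hI, hsupp, ← hFpos x hx.2] at this
      exact this
    · intro hxS
      have : 0 < ∫ y in Ioc 0 x, g y := by
        rw [hI, hsupp, ← hFpos x hx.2]; exact hxS
      exact mul_pos hγx this
  intro x hx
  rw [hupos x hx, hmem x hx]
end

section
/- Let $m < \infty$, $\lambda > 0$, and $u \in W^{1,1}(0,m)$ with $u(0) = 0$ satisfying $\lambda u + (\gamma u)' = h$ for some $h \in L^1(0,m)$, where $\gamma \in W^{1,\infty}(0,m)$ with $\gamma \geq \gamma_0 > 0$. Then $\lambda \|u\|_{L^1(0,m)} \leq \|h\|_{L^1(0,m)}$. -/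
open MeasureTheory

/-- Dissipativity estimate on `(0,m)` with `m < ∞`: if `u ∈ W^{1,1}(0,m)`, `u(0)=0`,
solves `λu + (γu)' = h` (encoded in integrated form `γ(s)u(s) = ∫_0^s (h - λu)`),
with `λ > 0` and `γ ∈ W^{1,∞}`, `γ ≥ γ₀ > 0`, then `λ‖u‖_{L¹} ≤ ‖h‖_{L¹}`. -/
theorem stmt8 (m lam γ0 : ℝ) (hm : 0 < m) (hlam : 0 < lam) (hγ0 : 0 < γ0)
    (γ u h : ℝ → ℝ)
    (hγlip : ∃ L : NNReal, LipschitzOnWith L γ (Set.Icc 0 m))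
    (hγlb : ∀ s ∈ Set.Icc 0 m, γ0 ≤ γ s)
    (hucont : ContinuousOn u (Set.Icc 0 m))
    (hh : IntegrableOn h (Set.Ioc 0 m))
    (heq : ∀ s ∈ Set.Icc 0 m, γ s * u s = ∫ y in Set.Ioc 0 s, (h y - lam * u y)) :
    lam * ∫ s in Set.Ioc 0 m, |u s| ≤ ∫ s in Set.Ioc 0 m, |h s| := by
  obtain ⟨L, hγlip⟩ := hγlip
  have hγc : ContinuousOn γ (Set.Icc 0 m) := hγlip.continuousOn
  have hwcont : ContinuousOn (fun t => γ t * u t) (Set.Icc 0 m) := hγc.mul hucont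
  have huint : IntegrableOn u (Set.Icc 0 m) := hucont.integrableOn_compact isCompact_Icc
  have huIoc : IntegrableOn u (Set.Ioc 0 m) := huint.mono_set Set.Ioc_subset_Icc_self
  have huabs : IntegrableOn (fun y => |u y|) (Set.Ioc 0 m) := huIoc.abs
  have hhabs : IntegrableOn (fun y => |h y|) (Set.Ioc 0 m) := hh.abs
  have hgint : IntegrableOn (fun y => h y - lam * u y) (Set.Ioc 0 m) :=
    hh.sub (huIoc.const_mul lam)
  -- integrability on subintervals
  have hmono : ∀ (f : ℝ → ℝ), IntegrableOn f (Set.Ioc 0 m) → ∀ a t : ℝ, 0 ≤ a → t ≤ m →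
      IntegrableOn f (Set.Ioc a t) := fun f hf a t ha ht =>
    hf.mono_set (Set.Ioc_subset_Ioc ha ht)
  -- splitting of integrals
  have hsplit : ∀ (f : ℝ → ℝ), IntegrableOn f (Set.Ioc 0 m) → ∀ a t : ℝ, 0 ≤ a → a ≤ t → t ≤ m →
      (∫ y in Set.Ioc 0 t, f y) = (∫ y in Set.Ioc 0 a, f y) + ∫ y in Set.Ioc a t, f y := by
    intro f hf a t h0a hat htm
    rw [← Set.Ioc_union_Ioc_eq_Ioc h0a hat,
      MeasureTheory.setIntegral_union (Set.Ioc_disjoint_Ioc_of_le le_rfl) measurableSet_Ioc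
        (hmono f hf 0 a le_rfl (hat.trans htm)) (hmono f hf a t h0a htm)]
  -- increment identity for w = γ u
  have hwdiff : ∀ a t : ℝ, 0 ≤ a → a ≤ t → t ≤ m →
      γ t * u t - γ a * u a = ∫ y in Set.Ioc a t, (h y - lam * u y) := by
    intro a t h0a hat htm
    rw [heq t ⟨h0a.trans hat, htm⟩, heq a ⟨h0a, hat.trans htm⟩,
      hsplit _ hgint a t h0a hat htm]
    ring
  -- u 0 = 0
  have hu0 : u 0 = 0 := by
    have h0 := heq 0 ⟨le_rfl, hm.le⟩
    rw [Set.Ioc_self, Measure.restrict_empty, integral_zero_measure] at h0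
    have hγpos : 0 < γ 0 := lt_of_lt_of_le hγ0 (hγlb 0 ⟨le_rfl, hm.le⟩)
    rcases mul_eq_zero.mp h0 with h' | h'
    · exact absurd h' (ne_of_gt hγpos)
    · exact h'
  -- the Lyapunov functional
  set F : ℝ → ℝ :=
    fun t => |γ t * u t| + lam * (∫ y in Set.Ioc 0 t, |u y|) - ∫ y in Set.Ioc 0 t, |h y|
    with hF
  -- continuity of F
  have hFc : ContinuousOn F (Set.Icc 0 m) := by
    rw [hF]
    apply ContinuousOn.sub
    · apply ContinuousOn.add hwcont.abs
      exact continuousOn_const.mul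
        (intervalIntegral.continuousOn_primitive
          ((integrableOn_Icc_iff_integrableOn_Ioc (f := fun y => |u y|)).mpr huabs))
    · exact intervalIntegral.continuousOn_primitive
        ((integrableOn_Icc_iff_integrableOn_Ioc (f := fun y => |h y|)).mpr hhabs)
  -- component lemma: constant sign of u on [a,s] with u a = 0 gives F s ≤ F a
  have hcomp : ∀ (σ a s : ℝ), (σ = 1 ∨ σ = -1) → 0 ≤ a → a ≤ s → s ≤ m → u a = 0 →
      (∀ y ∈ Set.Icc a s, 0 ≤ σ * u y) → F s ≤ F a := by
    intro σ a s hσ h0a has hsm hua hsgn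
    have hσabs : |σ| = 1 := by rcases hσ with h' | h' <;> simp [h']
    have hsmem : s ∈ Set.Icc 0 m := ⟨h0a.trans has, hsm⟩
    have hγs : 0 < γ s := lt_of_lt_of_le hγ0 (hγlb s hsmem)
    have hus : 0 ≤ σ * u s := hsgn s ⟨has, le_rfl⟩
    have h1 : |γ s * u s| = σ * (γ s * u s) := by
      have hnn : 0 ≤ σ * (γ s * u s) := by nlinarith
      have e1 : |σ * (γ s * u s)| = |γ s * u s| := by rw [abs_mul, hσabs, one_mul]
      rw [← e1, abs_of_nonneg hnn]
    have habs' : ∀ y ∈ Set.Ioc a s, |u y| = σ * u y := by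
      intro y hy
      have hyy := hsgn y ⟨hy.1.le, hy.2⟩
      have e1 : |σ * u y| = |u y| := by rw [abs_mul, hσabs, one_mul]
      rw [← e1, abs_of_nonneg hyy]
    have hd := hwdiff a s h0a has hsm
    rw [hua, mul_zero, sub_zero] at hd
    -- σ * w s = ∫ σ h - lam * ∫ |u| on Ioc a s
    have h2 : σ * (γ s * u s) =
        (∫ y in Set.Ioc a s, σ * h y) - lam * ∫ y in Set.Ioc a s, |u y| := by
      rw [hd, ← integral_const_mul]
      have e2 : ∀ y ∈ Set.Ioc a s, σ * (h y - lam * u y) = σ * h y - lam * |u y| := by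
        intro y hy; rw [habs' y hy]; ring
      rw [MeasureTheory.setIntegral_congr_fun measurableSet_Ioc e2,
        MeasureTheory.integral_sub ((hmono h hh a s h0a hsm).const_mul σ)
          ((hmono _ huabs a s h0a hsm).const_mul lam),
        integral_const_mul, integral_const_mul]
    have h3 : (∫ y in Set.Ioc a s, σ * h y) ≤ ∫ y in Set.Ioc a s, |h y| := by
      apply setIntegral_mono_on ((hmono h hh a s h0a hsm).const_mul σ)
        (hmono _ hhabs a s h0a hsm) measurableSet_Ioc
      intro y _
      calc σ * h y ≤ |σ * h y| := le_abs_self _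
        _ = |h y| := by rw [abs_mul, hσabs, one_mul]
    have hIus := hsplit _ huabs a s h0a has hsm
    have hIhs := hsplit _ hhabs a s h0a has hsm
    simp only [hF]
    rw [hua, mul_zero, abs_zero, h1, hIus, hIhs]
    linarith
  -- Gronwall-type lemma near a zero of u
  have hgron : ∀ T t : ℝ, 0 ≤ T → T ≤ t → t ≤ m → u T = 0 → t - T ≤ γ0 / (2 * lam) →
      lam * (∫ y in Set.Ioc T t, |u y|) ≤ ∫ y in Set.Ioc T t, |h y| := by
    intro T t h0T hTt htm huT hdelta
    rcases eq_or_lt_of_le hTt with rfl | hTt'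
    · simp [Set.Ioc_self]
    have hV0 : 0 ≤ ∫ y in Set.Ioc T t, |u y| :=
      setIntegral_nonneg measurableSet_Ioc fun y _ => abs_nonneg _
    have hH0 : 0 ≤ ∫ y in Set.Ioc T t, |h y| :=
      setIntegral_nonneg measurableSet_Ioc fun y _ => abs_nonneg _
    set V := ∫ y in Set.Ioc T t, |u y| with hV
    set H := ∫ y in Set.Ioc T t, |h y| with hH
    -- pointwise bound γ0 * |u y| ≤ lam * V + H
    have hptw : ∀ y ∈ Set.Ioc T t, γ0 * |u y| ≤ lam * V + H := by
      intro y hy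
      have hym : y ∈ Set.Icc 0 m := ⟨h0T.trans hy.1.le, hy.2.trans htm⟩
      have hγy : 0 < γ y := lt_of_lt_of_le hγ0 (hγlb y hym)
      have hγyb : γ0 ≤ γ y := hγlb y hym
      have hd := hwdiff T y h0T hy.1.le (hy.2.trans htm)
      rw [huT, mul_zero, sub_zero] at hd
      have hb1 : |γ y * u y| ≤ (∫ z in Set.Ioc T y, |h z|) +
          lam * ∫ z in Set.Ioc T y, |u z| := by
        rw [hd]
        calc |∫ z in Set.Ioc T y, (h z - lam * u z)|
            ≤ ∫ z in Set.Ioc T y, |h z - lam * u z| := by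
              simpa [Real.norm_eq_abs] using
                norm_integral_le_integral_norm (μ := volume.restrict (Set.Ioc T y))
                  (fun z => h z - lam * u z)
          _ ≤ ∫ z in Set.Ioc T y, (|h z| + lam * |u z|) := by
              apply setIntegral_mono_on (hmono _ hgint T y h0T (hy.2.trans htm)).abs
                ((hmono _ hhabs T y h0T (hy.2.trans htm)).add
                  ((hmono _ huabs T y h0T (hy.2.trans htm)).const_mul lam))
                measurableSet_Ioc
              intro z _
              calc |h z - lam * u z| ≤ |h z| + |lam * u z| := abs_sub _ _
                _ = |h z| + lam * |u z| := by rw [abs_mul, abs_of_pos hlam]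
          _ = (∫ z in Set.Ioc T y, |h z|) + lam * ∫ z in Set.Ioc T y, |u z| := by
              rw [MeasureTheory.integral_add (hmono _ hhabs T y h0T (hy.2.trans htm))
                ((hmono _ huabs T y h0T (hy.2.trans htm)).const_mul lam),
                integral_const_mul]
      have hmset : ∀ (f : ℝ → ℝ), IntegrableOn f (Set.Ioc 0 m) → (∀ z, 0 ≤ f z) →
          (∫ z in Set.Ioc T y, f z) ≤ ∫ z in Set.Ioc T t, f z := by
        intro f hf hf0
        apply setIntegral_mono_set (hmono f hf T t h0T htm)
          (Filter.Eventually.of_forall fun z => hf0 z)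
        exact (Set.Ioc_subset_Ioc_right hy.2).eventuallyLE
      have hb2 : (∫ z in Set.Ioc T y, |h z|) ≤ H := hmset _ hhabs fun z => abs_nonneg _
      have hb3 : (∫ z in Set.Ioc T y, |u z|) ≤ V := hmset _ huabs fun z => abs_nonneg _
      have he : |γ y * u y| = γ y * |u y| := by rw [abs_mul, abs_of_pos hγy]
      nlinarith [abs_nonneg (u y)]
    -- integrate the pointwise bound
    have hint : γ0 * V ≤ (t - T) * (lam * V + H) := by
      calc γ0 * V = ∫ y in Set.Ioc T t, γ0 * |u y| := (integral_const_mul _ _).symm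
        _ ≤ ∫ y in Set.Ioc T t, (lam * V + H) := by
            apply setIntegral_mono_on ((hmono _ huabs T t h0T htm).const_mul γ0)
              (integrableOn_const measure_Ioc_lt_top.ne) measurableSet_Ioc hptw
        _ = (t - T) * (lam * V + H) := by
            rw [setIntegral_const, Real.volume_real_Ioc_of_le hTt,
              smul_eq_mul]
    rw [le_div_iff₀ (by positivity)] at hdelta
    nlinarith [mul_nonneg (sub_nonneg.mpr hTt) hH0, mul_nonneg (sub_nonneg.mpr hTt) hV0,
      sub_pos.mpr hTt', mul_pos hlam (sub_pos.mpr hTt')]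
  -- last-zero extraction
  have hlastzero : ∀ b s : ℝ, 0 ≤ b → b ≤ s → s ≤ m → u b = 0 → u s ≠ 0 →
      ∃ a, b ≤ a ∧ a < s ∧ u a = 0 ∧ ∀ y ∈ Set.Ioc a s, u y ≠ 0 := by
    intro b s h0b hbs hsm hub hus
    set Z := Set.Icc b s ∩ u ⁻¹' {0} with hZ
    have hZc : IsClosed Z :=
      (hucont.mono (Set.Icc_subset_Icc h0b hsm)).preimage_isClosed_of_isClosed
        isClosed_Icc isClosed_singleton
    have hbZ : b ∈ Z := ⟨⟨le_rfl, hbs⟩, hub⟩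
    have hZne : Z.Nonempty := ⟨b, hbZ⟩
    have hZbdd : BddAbove Z := ⟨s, fun x hx => hx.1.2⟩
    have haZ : sSup Z ∈ Z := hZc.csSup_mem hZne hZbdd
    refine ⟨sSup Z, le_csSup hZbdd hbZ, ?_, haZ.2, ?_⟩
    · exact lt_of_le_of_ne haZ.1.2 fun he => hus (he ▸ haZ.2)
    · intro y hy hy0
      exact absurd (le_csSup hZbdd ⟨⟨haZ.1.1.trans hy.1.le, hy.2⟩, hy0⟩) (not_le.mpr hy.1)
  -- sign constancy + component lemma
  have hsign_comp : ∀ a s : ℝ, 0 ≤ a → a ≤ s → s ≤ m → u a = 0 →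
      (∀ y ∈ Set.Ioc a s, u y ≠ 0) → F s ≤ F a := by
    intro a s h0a has hsm hua hnz
    rcases eq_or_lt_of_le has with rfl | has'
    · exact le_rfl
    have hus : u s ≠ 0 := hnz s ⟨has', le_rfl⟩
    have hcsub : ∀ y : ℝ, a ≤ y → ContinuousOn u (Set.Icc y s) := fun y hy =>
      hucont.mono (Set.Icc_subset_Icc (h0a.trans hy) hsm)
    rcases lt_or_gt_of_ne hus with hneg | hpos
    · refine hcomp (-1) a s (Or.inr rfl) h0a has hsm hua ?_
      intro y hy
      rcases eq_or_lt_of_le hy.1 with rfl | h'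
      · simp [hua]
      · by_contra hcon
        push_neg at hcon
        have hy' : 0 < u y := by nlinarith
        have h0m : (0:ℝ) ∈ Set.Icc (u s) (u y) := ⟨hneg.le, hy'.le⟩
        obtain ⟨z, hz, hz0⟩ := intermediate_value_Icc' hy.2 (hcsub y h'.le) h0m
        exact hnz z ⟨h'.trans_le hz.1, hz.2⟩ hz0
    · refine hcomp 1 a s (Or.inl rfl) h0a has hsm hua ?_
      intro y hy
      rcases eq_or_lt_of_le hy.1 with rfl | h'
      · simp [hua]
      · by_contra hcon
        push_neg at hcon
        have hy' : u y < 0 := by nlinarith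
        have h0m : (0:ℝ) ∈ Set.Icc (u y) (u s) := ⟨hy'.le, hpos.le⟩
        obtain ⟨z, hz, hz0⟩ := intermediate_value_Icc hy.2 (hcsub y h'.le) h0m
        exact hnz z ⟨h'.trans_le hz.1, hz.2⟩ hz0
  -- the sup argument
  set S := {t : ℝ | t ∈ Set.Icc 0 m ∧ ∀ s : ℝ, 0 ≤ s → s ≤ t → F s ≤ 0} with hSdef
  have hF0 : F 0 ≤ 0 := by
    simp only [hF]
    rw [hu0, mul_zero, abs_zero, Set.Ioc_self, Measure.restrict_empty,
      integral_zero_measure, integral_zero_measure]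
    norm_num
  have hS0 : (0:ℝ) ∈ S := ⟨⟨le_rfl, hm.le⟩, fun s hs0 hs0' => by
    have : s = 0 := le_antisymm hs0' hs0
    rw [this]; exact hF0⟩
  have hSne : S.Nonempty := ⟨0, hS0⟩
  have hSbdd : BddAbove S := ⟨m, fun x hx => hx.1.2⟩
  set T := sSup S with hTdef
  have hT0 : 0 ≤ T := le_csSup hSbdd hS0
  have hTm : T ≤ m := csSup_le hSne fun x hx => hx.1.2
  have hFle : ∀ s : ℝ, 0 ≤ s → s < T → F s ≤ 0 := by
    intro s hs0 hsT
    obtain ⟨t, htS, hst⟩ := exists_lt_of_lt_csSup hSne hsT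
    exact htS.2 s hs0 hst.le
  have hFT : F T ≤ 0 := by
    have hclo : T ∈ closure S := csSup_mem_closure hSne hSbdd
    have hcw : ContinuousWithinAt F S T :=
      (hFc T ⟨hT0, hTm⟩).mono fun x hx => hx.1
    have hne : (nhdsWithin T S).NeBot := mem_closure_iff_nhdsWithin_neBot.mp hclo
    refine le_of_tendsto hcw ?_
    filter_upwards [self_mem_nhdsWithin] with x hx
    exact hx.2 x hx.1.1 le_rfl
  have hkey : ∀ t' : ℝ, T < t' → t' ≤ m → (∀ s : ℝ, 0 ≤ s → s ≤ t' → F s ≤ 0) → False := by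
    intro t' h1 h2 h3
    exact absurd (le_csSup hSbdd ⟨⟨hT0.trans h1.le, h2⟩, h3⟩) (not_le.mpr h1)
  have hTem : T = m := by
    by_contra hne'
    have hTm' : T < m := lt_of_le_of_ne hTm hne'
    by_cases hc : u T = 0
    · -- case B : u T = 0
      have hδ0 : 0 < γ0 / (2 * lam) := by positivity
      set t' := min (T + γ0 / (2 * lam)) m with ht'
      have h1 : T < t' := lt_min (by linarith) hTm'
      have h2 : t' ≤ m := min_le_right _ _
      refine hkey t' h1 h2 ?_
      intro s hs0 hst'
      rcases le_or_gt s T with hsT | hsT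
      · rcases eq_or_lt_of_le hsT with rfl | h'
        · exact hFT
        · exact hFle s hs0 h'
      · have hsm : s ≤ m := hst'.trans h2
        have hsd : s - T ≤ γ0 / (2 * lam) := by
          have := hst'.trans (min_le_left _ _); linarith
        have hFTz : F T = lam * (∫ y in Set.Ioc 0 T, |u y|) - ∫ y in Set.Ioc 0 T, |h y| := by
          simp only [hF]; rw [hc, mul_zero, abs_zero]; ring
        by_cases hus : u s = 0
        · have hg := hgron T s hT0 hsT.le hsm hc hsd
          have hIus := hsplit _ huabs T s hT0 hsT.le hsm
          have hIhs := hsplit _ hhabs T s hT0 hsT.le hsm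
          have hFs : F s = lam * (∫ y in Set.Ioc 0 s, |u y|) - ∫ y in Set.Ioc 0 s, |h y| := by
            simp only [hF]; rw [hus, mul_zero, abs_zero]; ring
          rw [hFs, hIus, hIhs]
          rw [hFTz] at hFT
          linarith
        · obtain ⟨a, hTa, has, hua, hnz⟩ := hlastzero T s hT0 hsT.le hsm hc hus
          have ha0 : 0 ≤ a := hT0.trans hTa
          have ham : a ≤ m := has.le.trans hsm
          have hstep := hsign_comp a s ha0 has.le hsm hua hnz
          have hg := hgron T a hT0 hTa ham hc (by linarith)
          have hIus := hsplit _ huabs T a hT0 hTa ham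
          have hIhs := hsplit _ hhabs T a hT0 hTa ham
          have hFa : F a = lam * (∫ y in Set.Ioc 0 a, |u y|) - ∫ y in Set.Ioc 0 a, |h y| := by
            simp only [hF]; rw [hua, mul_zero, abs_zero]; ring
          rw [hFTz] at hFT
          rw [hFa, hIus, hIhs] at hstep
          linarith
    · -- case A : u T ≠ 0
      obtain ⟨a, ha0, haT, hua, hnz⟩ := hlastzero 0 T le_rfl hT0 hTm hu0 hc
      have hFa : F a ≤ 0 := hFle a ha0 haT
      -- continuity of u at T gives a sign-preserving neighborhood
      have hcw : ContinuousWithinAt u (Set.Icc 0 m) T := hucont T ⟨hT0, hTm⟩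
      rw [Metric.continuousWithinAt_iff] at hcw
      obtain ⟨δ1, hδ1, hball⟩ := hcw |u T| (abs_pos.mpr hc)
      set t' := min (T + δ1 / 2) m with ht'
      have h1 : T < t' := lt_min (by linarith) hTm'
      have h2 : t' ≤ m := min_le_right _ _
      refine hkey t' h1 h2 ?_
      intro s hs0 hst'
      rcases le_or_gt s T with hsT | hsT
      · rcases eq_or_lt_of_le hsT with rfl | h'
        · exact hFT
        · exact hFle s hs0 h'
      · have hsm : s ≤ m := hst'.trans h2
        have hnz' : ∀ y ∈ Set.Ioc a s, u y ≠ 0 := by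
          intro y hy
          rcases le_or_gt y T with hyT | hyT
          · exact hnz y ⟨hy.1, hyT⟩
          · intro hy0
            have hym : y ∈ Set.Icc 0 m := ⟨hT0.trans hyT.le, hy.2.trans hsm⟩
            have hdist : dist y T < δ1 := by
              rw [Real.dist_eq, abs_of_nonneg (by linarith : (0:ℝ) ≤ y - T)]
              have : y ≤ t' := hy.2.trans hst'
              have := this.trans (min_le_left _ _)
              linarith
            have := hball hym hdist
            rw [hy0, Real.dist_eq, zero_sub, abs_neg] at this
            exact lt_irrefl _ this
        exact (hsign_comp a s ha0 (haT.le.trans hsT.le) hsm hua hnz').trans hFa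
  have hFm : F m ≤ 0 := hTem ▸ hFT
  simp only [hF] at hFm
  have := abs_nonneg (γ m * u m)
  linarith
end

section
/- Let $u \in W^{1,1}(0,\infty)$ with $u(0) = 0$ satisfy $\lambda u + (\gamma u)' = h$ with $\lambda > 0$, $h \in L^1(0,\infty)$, $\gamma \in W^{1,\infty}(0,\infty)$, $\gamma \geq \gamma_0 > 0$. Then $\lambda \|u\|_{L^1(0,\infty)} \leq \|h\|_{L^1(0,\infty)}$. -/
open MeasureTheory intervalIntegral

lemma aux_abs_le_sqrt (w e : ℝ) : |w| ≤ Real.sqrt (w ^ 2 + e ^ 2) := by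
  rw [← Real.sqrt_sq_eq_abs]
  exact Real.sqrt_le_sqrt (by nlinarith)

lemma aux_core (lam ε T : ℝ) (hε : 0 < ε) (hT : 0 ≤ T) (v uu : ℝ → ℝ)
    (hv : Continuous v) (hu : Continuous uu) :
    lam * ∫ t in (0:ℝ)..T,
        ((∫ x in (0:ℝ)..t, (v x - lam * uu x)) * uu t /
          Real.sqrt ((∫ x in (0:ℝ)..t, (v x - lam * uu x)) ^ 2 + ε ^ 2))
      ≤ (∫ t in (0:ℝ)..T, |v t|) + ε := by
  set g : ℝ → ℝ := fun x => v x - lam * uu x with hgdef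
  have hgc : Continuous g := hv.sub (continuous_const.mul hu)
  set W : ℝ → ℝ := fun t => ∫ x in (0:ℝ)..t, g x with hWdef
  have hW : ∀ t, HasDerivAt W (g t) t := fun t => (hgc.integral_hasStrictDerivAt 0 t).hasDerivAt
  have hWc : Continuous W := continuous_iff_continuousAt.2 fun t => (hW t).continuousAt
  set F : ℝ → ℝ := fun t => Real.sqrt (W t ^ 2 + ε ^ 2) with hFdef
  have hFpos : ∀ t, 0 < F t := fun t => Real.sqrt_pos.2 (by positivity)
  have hWF : ∀ t, |W t| ≤ F t := fun t => aux_abs_le_sqrt _ _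
  have hF : ∀ t, HasDerivAt F (W t * g t / F t) t := by
    intro t
    have h1 : HasDerivAt (fun s => W s ^ 2 + ε ^ 2) (2 * W t ^ 1 * g t) t :=
      ((hW t).pow 2).add_const _
    have h2 := h1.sqrt (by positivity)
    convert h2 using 1
    have hne := (hFpos t).ne'
    rw [hFdef]
    field_simp
  have hFc : Continuous F := ((hWc.pow 2).add continuous_const).sqrt
  have hF'c : Continuous fun t => W t * g t / F t :=
    (hWc.mul hgc).div hFc fun t => (hFpos t).ne'
  have ftc : ∫ t in (0:ℝ)..T, W t * g t / F t = F T - F 0 :=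
    integral_eq_sub_of_hasDerivAt (fun t _ => hF t) (hF'c.intervalIntegrable 0 T)
  have hF0 : F 0 = ε := by
    have hW0 : W 0 = 0 := integral_same
    rw [hFdef]
    simp only [hW0]
    rw [show (0:ℝ) ^ 2 + ε ^ 2 = ε ^ 2 by ring, Real.sqrt_sq hε.le]
  have hsplit : ∫ t in (0:ℝ)..T, W t * g t / F t
      = (∫ t in (0:ℝ)..T, W t * v t / F t) - lam * ∫ t in (0:ℝ)..T, W t * uu t / F t := by
    rw [← intervalIntegral.integral_const_mul, ← intervalIntegral.integral_sub]
    · apply intervalIntegral.integral_congr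
      intro t _
      have hne := (hFpos t).ne'
      simp only [hgdef]
      field_simp
    · exact ((hWc.mul hv).div hFc fun t => (hFpos t).ne').intervalIntegrable 0 T
    · exact (continuous_const.mul ((hWc.mul hu).div hFc fun t => (hFpos t).ne')).intervalIntegrable 0 T
  have hmono : ∫ t in (0:ℝ)..T, W t * v t / F t ≤ ∫ t in (0:ℝ)..T, |v t| := by
    apply intervalIntegral.integral_mono_on hT
      (((hWc.mul hv).div hFc fun t => (hFpos t).ne').intervalIntegrable 0 T)
      ((hv.abs).intervalIntegrable 0 T)
    intro t _
    show W t * v t / F t ≤ |v t|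
    rw [div_le_iff₀ (hFpos t)]
    calc W t * v t ≤ |W t * v t| := le_abs_self _
      _ = |W t| * |v t| := abs_mul _ _
      _ ≤ F t * |v t| := by
          have := hWF t
          have := abs_nonneg (v t)
          nlinarith
      _ = |v t| * F t := mul_comm _ _
  have hFT : 0 ≤ F T := (hFpos T).le
  have heq2 : lam * ∫ t in (0:ℝ)..T, W t * uu t / F t
      = (∫ t in (0:ℝ)..T, W t * v t / F t) - (F T - ε) := by
    rw [← hF0] at *
    linarith [ftc, hsplit]
  rw [heq2]
  linarith

/-- Dissipativity estimate on the half-line: if `u ∈ W^{1,1}(0,∞)`, `u(0)=0`, solves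
`λu + (γu)' = h` (encoded in integrated form), with `λ > 0`, `h ∈ L¹(0,∞)`,
`γ ∈ W^{1,∞}(0,∞)`, `γ ≥ γ₀ > 0`, then `λ‖u‖_{L¹(0,∞)} ≤ ‖h‖_{L¹(0,∞)}`. -/
theorem stmt9 (lam γ0 : ℝ) (hlam : 0 < lam) (hγ0 : 0 < γ0) (γ u h : ℝ → ℝ)
    (hγlip : ∃ L : NNReal, LipschitzWith L γ)
    (hγlb : ∀ s ∈ Set.Ici (0 : ℝ), γ0 ≤ γ s)
    (hucont : ContinuousOn u (Set.Ici 0))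
    (huint : IntegrableOn u (Set.Ioi 0))
    (hh : IntegrableOn h (Set.Ioi 0))
    (heq : ∀ s ∈ Set.Ici (0 : ℝ), γ s * u s = ∫ y in Set.Ioc 0 s, (h y - lam * u y)) :
    lam * ∫ s in Set.Ioi 0, |u s| ≤ ∫ s in Set.Ioi 0, |h s| := by
  classical
  set uu : ℝ → ℝ := fun s => u (max s 0) with huudef
  have huuc : Continuous uu :=
    hucont.comp_continuous (continuous_id.max continuous_const) fun x => Set.mem_Ici.2 (le_max_right _ _)
  have huueq : ∀ s : ℝ, 0 ≤ s → uu s = u s := fun s hs => by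
    simp only [huudef, max_eq_left hs]
  set hind : ℝ → ℝ := (Set.Ioi (0:ℝ)).indicator h with hinddef
  have hht : Integrable hind := (integrable_indicator_iff measurableSet_Ioi).2 hh
  set A : ℝ := ∫ s in Set.Ioi (0:ℝ), |h s| with hAdef
  have habs_int : IntegrableOn (fun s => |h s|) (Set.Ioi (0:ℝ)) := hh.abs
  have huabs_int : IntegrableOn (fun s => |u s|) (Set.Ioi (0:ℝ)) := huint.abs
  have key : ∀ T : ℝ, 0 ≤ T → lam * ∫ s in Set.Ioc (0:ℝ) T, |u s| ≤ A := by
    intro T hT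
    have hex : ∀ n : ℕ, ∃ v : ℝ → ℝ, Continuous v ∧ Integrable v ∧
        (∫ x, ‖hind x - v x‖) ≤ (1/(n+1:ℝ))^2 := by
      intro n
      obtain ⟨g, -, hg1, hg2, hg3⟩ :=
        hht.exists_hasCompactSupport_integral_sub_le (ε := (1/(n+1:ℝ))^2) (by positivity)
      exact ⟨g, hg2, hg3, hg1⟩
    choose v hvc hvint hvapp using hex
    set δ : ℕ → ℝ := fun n => 1/(n+1:ℝ) with hδdef
    have hδpos : ∀ n, 0 < δ n := fun n => by positivity
    have hδ0 : Filter.Tendsto δ Filter.atTop (nhds 0) := tendsto_one_div_add_atTop_nhds_zero_nat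
    have hδsq0 : Filter.Tendsto (fun n => δ n ^ 2) Filter.atTop (nhds 0) := by
      simpa using hδ0.pow 2
    set W : ℕ → ℝ → ℝ := fun n t => ∫ x in (0:ℝ)..t, (v n x - lam * uu x) with hWdef
    have hWc : ∀ n, Continuous (W n) := fun n =>
      continuous_iff_continuousAt.2 fun t =>
        (((hvc n).sub (continuous_const.mul huuc)).integral_hasStrictDerivAt
          0 t).hasDerivAt.continuousAt
    have main : ∀ n, lam * ∫ t in Set.Ioc (0:ℝ) T,
          (W n t * uu t / Real.sqrt (W n t ^ 2 + δ n ^ 2))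
        ≤ (∫ t in Set.Ioc (0:ℝ) T, |v n t|) + δ n := by
      intro n
      have := aux_core lam (δ n) T (hδpos n) hT (v n) uu (hvc n) huuc
      rwa [intervalIntegral.integral_of_le hT, intervalIntegral.integral_of_le hT] at this
    -- distance from W n t to γ t * u t
    have hWdist : ∀ t, 0 < t → ∀ n, |W n t - γ t * u t| ≤ δ n ^ 2 := by
      intro t ht0 n
      have hIu : IntegrableOn u (Set.Ioc 0 t) := huint.mono_set Set.Ioc_subset_Ioi_self
      have hIh : IntegrableOn h (Set.Ioc 0 t) := hh.mono_set Set.Ioc_subset_Ioi_self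
      have hIv : IntegrableOn (v n) (Set.Ioc 0 t) := (hvint n).integrableOn
      have hIuu : IntegrableOn uu (Set.Ioc 0 t) := by
        apply (hIu.congr_fun (fun x hx => (huueq x hx.1.le).symm) measurableSet_Ioc)
      have e1 : W n t = (∫ x in Set.Ioc (0:ℝ) t, v n x) - lam * ∫ x in Set.Ioc (0:ℝ) t, u x := by
        have : W n t = ∫ x in Set.Ioc (0:ℝ) t, (v n x - lam * uu x) :=
          intervalIntegral.integral_of_le ht0.le
        rw [this, integral_sub hIv (hIuu.const_mul lam), MeasureTheory.integral_const_mul]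
        congr 1
        congr 1
        exact setIntegral_congr_fun measurableSet_Ioc fun x hx => huueq x hx.1.le
      have e2 : γ t * u t = (∫ x in Set.Ioc (0:ℝ) t, h x) - lam * ∫ x in Set.Ioc (0:ℝ) t, u x := by
        rw [heq t ht0.le, integral_sub hIh (hIu.const_mul lam), MeasureTheory.integral_const_mul]
      have e3 : W n t - γ t * u t = ∫ x in Set.Ioc (0:ℝ) t, (v n x - hind x) := by
        rw [e1, e2, integral_sub hIv (hht.integrableOn)]
        have : ∫ x in Set.Ioc (0:ℝ) t, h x = ∫ x in Set.Ioc (0:ℝ) t, hind x :=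
          setIntegral_congr_fun measurableSet_Ioc fun x hx => by
            simp [hinddef, Set.indicator_of_mem (Set.Ioc_subset_Ioi_self hx : x ∈ Set.Ioi (0:ℝ))]
        rw [this]
        ring
      rw [e3]
      calc |∫ x in Set.Ioc (0:ℝ) t, (v n x - hind x)|
          ≤ ∫ x in Set.Ioc (0:ℝ) t, |v n x - hind x| := by
            simpa [Real.norm_eq_abs] using
              MeasureTheory.norm_integral_le_integral_norm
                (μ := volume.restrict (Set.Ioc (0:ℝ) t)) (fun x => v n x - hind x)
        _ ≤ ∫ x, |v n x - hind x| := by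
            apply setIntegral_le_integral ((hvint n).sub hht).abs
            exact Filter.Eventually.of_forall fun x => abs_nonneg _
        _ = ∫ x, ‖hind x - v n x‖ := by
            congr 1
            ext x
            rw [Real.norm_eq_abs, abs_sub_comm]
        _ ≤ δ n ^ 2 := by simpa [hδdef] using hvapp n
    -- pointwise convergence of the regularized integrand
    have hconv : ∀ t ∈ Set.Ioc (0:ℝ) T, Filter.Tendsto
        (fun n => W n t * uu t / Real.sqrt (W n t ^ 2 + δ n ^ 2))
        Filter.atTop (nhds |u t|) := by
      intro t ht'
      have ht0 : (0:ℝ) < t := ht'.1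
      have huut : uu t = u t := huueq t ht0.le
      have hWt : Filter.Tendsto (fun n => W n t) Filter.atTop (nhds (γ t * u t)) := by
        have h0 : Filter.Tendsto (fun n => W n t - γ t * u t) Filter.atTop (nhds 0) :=
          squeeze_zero_norm (fun n => hWdist t ht0 n) hδsq0
        have := h0.add (tendsto_const_nhds (x := γ t * u t))
        simpa using this
      by_cases hu0 : u t = 0
      · have : (fun n => W n t * uu t / Real.sqrt (W n t ^ 2 + δ n ^ 2)) = fun _ => (0:ℝ) := by
          funext n
          rw [huut, hu0]
          simp
        rw [this, hu0]
        simpa using tendsto_const_nhds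
      · have hγpos : (0:ℝ) < γ t := lt_of_lt_of_le hγ0 (hγlb t ht0.le)
        have hwne : γ t * u t ≠ 0 := mul_ne_zero hγpos.ne' hu0
        have hden : Filter.Tendsto (fun n => Real.sqrt (W n t ^ 2 + δ n ^ 2))
            Filter.atTop (nhds |γ t * u t|) := by
          have h1 : Filter.Tendsto (fun n => W n t ^ 2 + δ n ^ 2) Filter.atTop
              (nhds ((γ t * u t) ^ 2 + 0)) := (hWt.pow 2).add hδsq0
          have := h1.sqrt
          rwa [add_zero, Real.sqrt_sq_eq_abs] at this
        have habsne : |γ t * u t| ≠ 0 := abs_ne_zero.2 hwne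
        have hlim := (hWt.mul (tendsto_const_nhds (x := uu t))).div hden habsne
        have : γ t * u t * uu t / |γ t * u t| = |u t| := by
          rw [huut, abs_mul, abs_of_pos hγpos]
          rw [div_eq_iff (by positivity : γ t * |u t| ≠ 0)]
          have h2 : |u t| * (γ t * |u t|) = γ t * (|u t| * |u t|) := by ring
          rw [h2, abs_mul_abs_self]
          ring
        rwa [this] at hlim
    -- limit of the left-hand side
    have haT : Filter.Tendsto
        (fun n => ∫ t in Set.Ioc (0:ℝ) T, (W n t * uu t / Real.sqrt (W n t ^ 2 + δ n ^ 2)))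
        Filter.atTop (nhds (∫ t in Set.Ioc (0:ℝ) T, |u t|)) := by
      apply tendsto_integral_of_dominated_convergence (fun t => |u t|)
      · intro n
        exact (((hWc n).mul huuc).div
          (((( hWc n).pow 2).add continuous_const).sqrt)
          (fun t => (Real.sqrt_pos.2 (add_pos_of_nonneg_of_pos (sq_nonneg _) (pow_pos (hδpos n) 2))).ne')).aestronglyMeasurable
      · exact huabs_int.mono_set Set.Ioc_subset_Ioi_self
      · intro n
        rw [ae_restrict_iff' measurableSet_Ioc]
        apply Filter.Eventually.of_forall
        intro t ht'
        have huut : uu t = u t := huueq t ht'.1.le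
        have hpos : (0:ℝ) < Real.sqrt (W n t ^ 2 + δ n ^ 2) := Real.sqrt_pos.2 (by positivity)
        rw [Real.norm_eq_abs, abs_div, abs_mul, abs_of_pos hpos, div_le_iff₀ hpos, ← huut]
        have h1 := aux_abs_le_sqrt (W n t) (δ n)
        have h2 := abs_nonneg (uu t)
        nlinarith
      · rw [ae_restrict_iff' measurableSet_Ioc]
        exact Filter.Eventually.of_forall hconv
    -- bound on the right-hand side
    have hRHS : ∀ n, (∫ t in Set.Ioc (0:ℝ) T, |v n t|) ≤ A + δ n ^ 2 := by
      intro n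
      have hIv : IntegrableOn (v n) (Set.Ioc (0:ℝ) T) := (hvint n).integrableOn
      have hIhind : IntegrableOn hind (Set.Ioc (0:ℝ) T) := hht.integrableOn
      have hg2 : IntegrableOn (fun t => |hind t| + |v n t - hind t|) (Set.Ioc (0:ℝ) T) :=
        hIhind.abs.add (hIv.sub hIhind).abs
      have h1 : (∫ t in Set.Ioc (0:ℝ) T, |v n t|)
          ≤ ∫ t in Set.Ioc (0:ℝ) T, (|hind t| + |v n t - hind t|) := by
        apply setIntegral_mono_on hIv.abs hg2 measurableSet_Ioc
        intro t _
        have := abs_sub_abs_le_abs_sub (v n t) (hind t)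
        linarith
      have h2 : ∫ t in Set.Ioc (0:ℝ) T, (|hind t| + |v n t - hind t|)
          = (∫ t in Set.Ioc (0:ℝ) T, |hind t|) + ∫ t in Set.Ioc (0:ℝ) T, |v n t - hind t| :=
        integral_add hIhind.abs (hIv.sub hIhind).abs
      have h3 : (∫ t in Set.Ioc (0:ℝ) T, |hind t|) ≤ A := by
        have he : ∫ t in Set.Ioc (0:ℝ) T, |hind t| = ∫ t in Set.Ioc (0:ℝ) T, |h t| :=
          setIntegral_congr_fun measurableSet_Ioc fun x hx => by
            simp [hinddef, Set.indicator_of_mem (Set.Ioc_subset_Ioi_self hx : x ∈ Set.Ioi (0:ℝ))]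
        rw [he, hAdef]
        apply setIntegral_mono_set habs_int
          (Filter.Eventually.of_forall fun x => abs_nonneg _)
          (Filter.Eventually.of_forall (Set.Ioc_subset_Ioi_self : Set.Ioc (0:ℝ) T ⊆ Set.Ioi 0))
      have h4 : (∫ t in Set.Ioc (0:ℝ) T, |v n t - hind t|) ≤ δ n ^ 2 := by
        calc (∫ t in Set.Ioc (0:ℝ) T, |v n t - hind t|)
            ≤ ∫ t, |v n t - hind t| := by
              apply setIntegral_le_integral ((hvint n).sub hht).abs
              exact Filter.Eventually.of_forall fun x => abs_nonneg _
          _ = ∫ x, ‖hind x - v n x‖ := by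
              congr 1
              ext x
              rw [Real.norm_eq_abs, abs_sub_comm]
          _ ≤ δ n ^ 2 := by simpa [hδdef] using hvapp n
      linarith
    -- conclude for fixed T
    have hfinal : ∀ n, lam * (∫ t in Set.Ioc (0:ℝ) T,
        (W n t * uu t / Real.sqrt (W n t ^ 2 + δ n ^ 2))) ≤ A + δ n ^ 2 + δ n := by
      intro n
      have := main n
      have := hRHS n
      linarith
    have hRlim : Filter.Tendsto (fun n => A + δ n ^ 2 + δ n) Filter.atTop (nhds A) := by
      have := (tendsto_const_nhds (x := A)).add hδsq0 |>.add hδ0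
      simpa using this
    exact le_of_tendsto_of_tendsto' (haT.const_mul lam) hRlim hfinal
  -- let T → ∞
  have hU : (⋃ n : ℕ, Set.Ioc (0:ℝ) (n:ℝ)) = Set.Ioi 0 := by
    ext x
    simp only [Set.mem_iUnion, Set.mem_Ioc, Set.mem_Ioi]
    constructor
    · rintro ⟨n, h1, -⟩; exact h1
    · intro hx
      obtain ⟨n, hn⟩ := exists_nat_ge x
      exact ⟨n, hx, hn⟩
  have hmonoS : Monotone fun n : ℕ => Set.Ioc (0:ℝ) (n:ℝ) := fun i j hij =>
    Set.Ioc_subset_Ioc_right (Nat.cast_le.2 hij)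
  have htend := tendsto_setIntegral_of_monotone (fun n : ℕ => measurableSet_Ioc) hmonoS
    (f := fun s => |u s|) (μ := volume) (by rw [hU]; exact huabs_int)
  rw [hU] at htend
  exact le_of_tendsto (htend.const_mul lam)
    (Filter.Eventually.of_forall fun n => key n (Nat.cast_nonneg n))
end

section
/- Let $\gamma \in W^{1,\infty}(0,\infty)$ with $0 < \gamma_0 \leq \gamma(s) \leq \|\gamma\|_\infty$ for all $s$. For $\lambda = 0$ and any nonzero nonnegative $h \in L^1(0,\infty)$, the function $u(s) = \frac{1}{\gamma(s)}\int_0^s h(y)\,dy$ does not belong to $L^1(0,\infty)$. Consequently $0$ belongs to the spectrum of the operator $A_0 u = -(\gamma u)'$ with domain $\{u \in W^{1,1}(0,\infty) : u(0)=0\}$, and $s(A_0) = 0$. -/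
open MeasureTheory

section helpers
open Set Real Filter
open scoped ENNReal NNReal Topology

lemma part1 (γ0 Γ : ℝ) (hγ0 : 0 < γ0) (γ h : ℝ → ℝ)
    (hγlb : ∀ s ∈ Set.Ici (0 : ℝ), γ0 ≤ γ s)
    (hγub : ∀ s ∈ Set.Ici (0 : ℝ), γ s ≤ Γ)
    (hh : IntegrableOn h (Set.Ioi 0))
    (hhnonneg : ∀ᵐ y ∂(volume.restrict (Set.Ioi 0)), 0 ≤ h y)
    (hhne : ¬ (∀ᵐ y ∂(volume.restrict (Set.Ioi 0)), h y = 0)) :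
    ¬ IntegrableOn (fun s => (γ s)⁻¹ * ∫ y in Set.Ioc 0 s, h y) (Set.Ioi 0) := by
  intro Hi
  have hΓ : 0 < Γ := lt_of_lt_of_le hγ0 (le_trans (hγlb 0 (Set.mem_Ici.2 le_rfl)) (hγub 0 (Set.mem_Ici.2 le_rfl)))
  have hIpos : 0 < ∫ y in Set.Ioi 0, h y := by
    rcases lt_or_eq_of_le (integral_nonneg_of_ae hhnonneg) with h' | h'
    · exact h'
    · exact absurd ((integral_eq_zero_iff_of_nonneg_ae hhnonneg hh).1 h'.symm) hhne
  have htend := intervalIntegral_tendsto_integral_Ioi 0 hh Filter.tendsto_id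
  have hev : ∀ᶠ s in Filter.atTop, (∫ y in Set.Ioi 0, h y) / 2 < ∫ y in (0:ℝ)..s, h y :=
    htend.eventually (eventually_gt_nhds (half_lt_self hIpos))
  obtain ⟨s0, hs0a, hs0b⟩ := (hev.and (Filter.eventually_ge_atTop 1)).exists
  have hs0pos : (0:ℝ) < s0 := lt_of_lt_of_le one_pos hs0b
  set c : ℝ := ∫ y in Set.Ioc 0 s0, h y with hc
  have hcpos : 0 < c := by
    have := intervalIntegral.integral_of_le (le_of_lt hs0pos) (f := h) (μ := volume)
    rw [hc, ← this]
    exact lt_trans (half_pos hIpos) hs0a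
  have hmono : ∀ s, s0 ≤ s → c ≤ ∫ y in Set.Ioc 0 s, h y := by
    intro s hs
    refine setIntegral_mono_set (hh.mono_set ?_) ?_ ?_
    · exact Set.Ioc_subset_Ioi_self
    · exact ae_restrict_of_ae_restrict_of_subset Set.Ioc_subset_Ioi_self hhnonneg
    · exact HasSubset.Subset.eventuallyLE (Set.Ioc_subset_Ioc_right hs)
  have Hi2 : IntegrableOn (fun s => (γ s)⁻¹ * ∫ y in Set.Ioc 0 s, h y) (Set.Ioi s0) :=
    Hi.mono_set (Set.Ioi_subset_Ioi (le_of_lt hs0pos))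
  have hconst : Integrable (fun _ : ℝ => c / Γ) (volume.restrict (Set.Ioi s0)) := by
    refine Integrable.mono' Hi2 aestronglyMeasurable_const ?_
    refine (ae_restrict_iff' measurableSet_Ioi).2 (Filter.Eventually.of_forall ?_)
    intro s hs
    have hs' : (0:ℝ) ≤ s := le_of_lt (lt_trans hs0pos hs)
    have hγs : γ0 ≤ γ s := hγlb s hs'
    have hγsΓ : γ s ≤ Γ := hγub s hs'
    have h1 : Γ⁻¹ ≤ (γ s)⁻¹ := by
      apply inv_anti₀ (lt_of_lt_of_le hγ0 hγs) hγsΓ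
    have h2 : c ≤ ∫ y in Set.Ioc 0 s, h y := hmono s (le_of_lt hs)
    have : c / Γ ≤ (γ s)⁻¹ * ∫ y in Set.Ioc 0 s, h y := by
      rw [div_eq_inv_mul]
      exact mul_le_mul h1 h2 (le_of_lt hcpos) (inv_nonneg.2 (le_of_lt (lt_of_lt_of_le hγ0 hγs)))
    calc ‖c / Γ‖ = c / Γ := Real.norm_of_nonneg (div_nonneg hcpos.le hΓ.le)
    _ ≤ _ := this
  have := (integrable_const_iff (c := c / Γ)).1 hconst
  rcases this with h' | h'
  · exact absurd h' (ne_of_gt (div_pos hcpos hΓ))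
  · have h'' := @measure_lt_top _ _ _ h' Set.univ
    rw [Measure.restrict_apply_univ, Real.volume_Ioi] at h''
    exact absurd h'' (lt_irrefl _)


lemma part3 (γ0 Γ lam : ℝ) (hγ0 : 0 < γ0) (hlam : 0 < lam) (γ g : ℝ → ℝ)
    (hγc : Continuous γ)
    (hγlb : ∀ s ∈ Set.Ici (0 : ℝ), γ0 ≤ γ s)
    (hγub : ∀ s ∈ Set.Ici (0 : ℝ), γ s ≤ Γ)
    (hg : IntegrableOn g (Set.Ioi 0)) :
    ∃ v : ℝ → ℝ, IntegrableOn v (Set.Ioi 0) ∧ ContinuousOn v (Set.Ici 0) ∧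
        ∀ s ∈ Set.Ici (0 : ℝ), γ s * v s = ∫ y in Set.Ioc 0 s, (g y - lam * v y) := by
  classical
  set Γ' : ℝ := max γ0 Γ with hΓ'
  have hΓ'pos : 0 < Γ' := lt_of_lt_of_le hγ0 (le_max_left _ _)
  set φ : ℝ → ℝ := fun t => (max γ0 (γ t))⁻¹ with hφ
  have hmaxpos : ∀ t, 0 < max γ0 (γ t) := fun t => lt_of_lt_of_le hγ0 (le_max_left _ _)
  have hφc : Continuous φ := (continuous_const.max hγc).inv₀ (fun t => (hmaxpos t).ne')
  have hφpos : ∀ t, 0 < φ t := fun t => inv_pos.2 (hmaxpos t)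
  have hφle : ∀ t, φ t ≤ γ0⁻¹ := fun t => inv_anti₀ hγ0 (le_max_left _ _)
  have hφge : ∀ t, 0 ≤ t → Γ'⁻¹ ≤ φ t := by
    intro t ht
    exact inv_anti₀ (hmaxpos t) (max_le_max le_rfl (hγub t ht))
  have hφγ : ∀ s, 0 ≤ s → γ s * φ s = 1 := by
    intro s hs
    have : max γ0 (γ s) = γ s := max_eq_right (hγlb s hs)
    rw [hφ]; simp only [this]
    exact mul_inv_cancel₀ (ne_of_gt (lt_of_lt_of_le hγ0 (hγlb s hs)))
  set F : ℝ → ℝ := fun t => ∫ u in (0:ℝ)..t, φ u with hFdef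
  have hF : ∀ t, HasDerivAt F (φ t) t := by
    intro t
    exact intervalIntegral.integral_hasDerivAt_right (hφc.intervalIntegrable _ _)
      (hφc.stronglyMeasurableAtFilter _ _) hφc.continuousAt
  have hFc : Continuous F := by
    exact continuous_iff_continuousAt.2 fun t => (hF t).continuousAt
  have hFmono : Monotone F := monotone_of_hasDerivAt_nonneg hF (fun t => (hφpos t).le)
  have hFgrow : ∀ y s : ℝ, 0 ≤ y → y ≤ s → Γ'⁻¹ * (s - y) ≤ F s - F y := by
    intro y s hy hys
    have h1 : F s - F y = ∫ u in y..s, φ u := by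
      rw [hFdef]
      exact intervalIntegral.integral_interval_sub_left (hφc.intervalIntegrable _ _)
        (hφc.intervalIntegrable _ _)
    have h2 : (∫ u in y..s, (Γ'⁻¹ : ℝ)) ≤ ∫ u in y..s, φ u := by
      apply intervalIntegral.integral_mono_on hys (intervalIntegrable_const)
        (hφc.intervalIntegrable _ _)
      intro x hx
      exact hφge x (le_trans hy hx.1)
    rw [h1]
    calc Γ'⁻¹ * (s - y) = ∫ u in y..s, (Γ'⁻¹ : ℝ) := by
          rw [intervalIntegral.integral_const, smul_eq_mul, mul_comm]
    _ ≤ _ := h2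
  set B : ℝ → ℝ := fun y => g y * Real.exp (lam * F y) with hBdef
  set W : ℝ → ℝ := fun r => ∫ y in Set.Ioc 0 r, B y with hWdef
  set e : ℝ → ℝ := fun r => Real.exp (-(lam * F r)) with hedef
  have hec : Continuous e := ((continuous_const.mul hFc)).neg.rexp
  set w : ℝ → ℝ := fun r => e r * W r with hwdef
  set v : ℝ → ℝ := fun r => φ r * w r with hvdef
  -- integrability of B on bounded sets
  have hgmeas : AEStronglyMeasurable g (volume.restrict (Set.Ioi 0)) := hg.aestronglyMeasurable
  have hBint : ∀ b : ℝ, 0 ≤ b → IntegrableOn B (Set.Ioc 0 b) := by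
    intro b hb
    have hgb : IntegrableOn g (Set.Ioc 0 b) := hg.mono_set Set.Ioc_subset_Ioi_self
    refine Integrable.mono' (hgb.norm.mul_const (Real.exp (lam * F b))) ?_ ?_
    · exact (hgmeas.mono_measure (Measure.restrict_mono Set.Ioc_subset_Ioi_self le_rfl)).mul
        ((continuous_const.mul hFc)).rexp.aestronglyMeasurable.restrict
    · refine (ae_restrict_iff' measurableSet_Ioc).2 (Filter.Eventually.of_forall ?_)
      intro y hy
      rw [hBdef]
      simp only [norm_mul, Real.norm_eq_abs, Real.abs_exp]
      exact mul_le_mul_of_nonneg_left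
        (Real.exp_le_exp.2 (mul_le_mul_of_nonneg_left (hFmono hy.2) hlam.le)) (abs_nonneg _)
  have hWcont : ContinuousOn W (Set.Ici 0) := by
    intro x hx
    have hx' : (0:ℝ) ≤ x := hx
    have hBIcc : IntegrableOn B (Set.Icc 0 (x+1)) := by
      have h := hBint (x+1) (by linarith)
      rwa [IntegrableOn, Measure.restrict_congr_set Ioc_ae_eq_Icc] at h
    have h1 : ContinuousOn W (Set.Icc 0 (x+1)) :=
      intervalIntegral.continuousOn_primitive hBIcc
    refine (h1 x ⟨hx', by linarith⟩).mono_of_mem_nhdsWithin ?_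
    rw [← Set.Ici_inter_Iic]
    exact Filter.inter_mem self_mem_nhdsWithin
      (mem_nhdsWithin_of_mem_nhds (Iic_mem_nhds (lt_add_one x)))
  have hvcont : ContinuousOn v (Set.Ici 0) :=
    (hφc.continuousOn).mul ((hec.continuousOn).mul hWcont)
  set c : ℝ := lam * Γ'⁻¹ with hcdef
  have hc : 0 < c := mul_pos hlam (inv_pos.2 hΓ'pos)
  have hexp_int : ∀ y : ℝ, IntegrableOn (fun s => Real.exp (-(c * (s - y)))) (Set.Ioi y) := by
    intro y
    have h0 : IntegrableOn (fun s : ℝ => Real.exp (c * y) * Real.exp (-c * s)) (Set.Ioi y) :=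
      (exp_neg_integrableOn_Ioi y hc).const_mul _
    refine h0.congr_fun (fun s _ => ?_) measurableSet_Ioi
    beta_reduce
    rw [← Real.exp_add]
    congr 1
    ring
  have hexp_deriv : ∀ y s : ℝ, HasDerivAt (fun t => -c⁻¹ * Real.exp (-(c * (t - y))))
      (Real.exp (-(c * (s - y)))) s := by
    intro y s
    have h1 : HasDerivAt (fun t : ℝ => -(c * (t - y))) (-c) s := by
      simpa using (((hasDerivAt_id s).sub_const y).const_mul c).fun_neg
    have h2 := (h1.exp).const_mul (-c⁻¹)
    refine h2.congr_deriv ?_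
    rw [mul_neg, neg_mul_neg, mul_comm (Real.exp _) c, ← mul_assoc, inv_mul_cancel₀ hc.ne', one_mul]
  have hexp_val : ∀ y : ℝ, ∫ s in Set.Ioi y, Real.exp (-(c * (s - y))) = c⁻¹ := by
    intro y
    have htend : Filter.Tendsto (fun t => -c⁻¹ * Real.exp (-(c * (t - y)))) Filter.atTop (𝓝 0) := by
      have h1 : Filter.Tendsto (fun t : ℝ => -(c * (t - y))) Filter.atTop Filter.atBot := by
        apply Filter.tendsto_neg_atBot_iff.2
        exact (Filter.tendsto_atTop_add_const_right _ (-y) Filter.tendsto_id).const_mul_atTop hc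
      have h2 : Filter.Tendsto (fun t => Real.exp (-(c * (t - y)))) Filter.atTop (𝓝 0) :=
        Real.tendsto_exp_atBot.comp h1
      simpa using h2.const_mul (-c⁻¹)
    have := integral_Ioi_of_hasDerivAt_of_tendsto
      ((hexp_deriv y y).continuousAt.continuousWithinAt)
      (fun x _ => hexp_deriv y x) (hexp_int y) htend
    rw [this]
    simp
  -- two-variable kernel
  set S : Set (ℝ × ℝ) := {p : ℝ × ℝ | 0 < p.2 ∧ p.2 ≤ p.1} with hSdef
  have hSmeas : MeasurableSet S :=
    (measurableSet_lt measurable_const measurable_snd).inter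
      (measurableSet_le measurable_snd measurable_fst)
  set G : ℝ × ℝ → ℝ≥0∞ :=
    fun p => (‖g p.2‖₊ : ℝ≥0∞) * ENNReal.ofReal (Real.exp (-(c * (p.1 - p.2)))) with hGdef
  set T : ℝ × ℝ → ℝ≥0∞ := S.indicator G with hTdef
  have hgmeas' : AEMeasurable (fun y => (‖g y‖₊ : ℝ≥0∞)) (volume.restrict (Set.Ioi 0)) :=
    hgmeas.enorm
  have hGmeas : AEMeasurable G
      ((volume.restrict (Set.Ioi 0)).prod (volume.restrict (Set.Ioi 0))) := by
    refine AEMeasurable.fun_mul ?_ ?_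
    · exact hgmeas'.comp_snd
    · exact (((continuous_const.mul (continuous_fst.sub continuous_snd)).neg.rexp).measurable.ennreal_ofReal).aemeasurable
  have hTmeas : AEMeasurable T
      ((volume.restrict (Set.Ioi 0)).prod (volume.restrict (Set.Ioi 0))) :=
    hGmeas.indicator hSmeas
  have hvmeas : AEStronglyMeasurable v (volume.restrict (Set.Ioi 0)) :=
    (hvcont.mono Set.Ioi_subset_Ici_self).aestronglyMeasurable measurableSet_Ioi
  have hvint : IntegrableOn v (Set.Ioi 0) := by
    refine ⟨hvmeas, ?_⟩
    rw [hasFiniteIntegral_def]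
    have stepA : ∀ s : ℝ, (‖v s‖₊ : ℝ≥0∞) ≤ ENNReal.ofReal γ0⁻¹ * (‖w s‖₊ : ℝ≥0∞) := by
      intro s
      rw [← enorm_eq_nnnorm, ← ofReal_norm, ← enorm_eq_nnnorm, ← ofReal_norm,
        ← ENNReal.ofReal_mul (inv_nonneg.2 hγ0.le)]
      apply ENNReal.ofReal_le_ofReal
      rw [hvdef]
      simp only [norm_mul]
      rw [Real.norm_eq_abs (φ s), abs_of_pos (hφpos s)]
      exact mul_le_mul_of_nonneg_right (hφle s) (norm_nonneg _)
    have stepB : ∀ s : ℝ, 0 < s →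
        (‖w s‖₊ : ℝ≥0∞) ≤ ∫⁻ y in Set.Ioi 0, T (s, y) := by
      intro s hspos
      have h1 : w s = ∫ y in Set.Ioc 0 s, g y * Real.exp (-(lam * (F s - F y))) := by
        rw [hwdef]
        simp only
        rw [hWdef, ← integral_const_mul]
        refine setIntegral_congr_fun measurableSet_Ioc (fun y _ => ?_)
        rw [hedef, hBdef]
        simp only
        rw [mul_comm (g y) _, ← mul_assoc, ← Real.exp_add, mul_comm _ (g y)]
        congr 2
        ring
      have h2 : (‖w s‖₊ : ℝ≥0∞) ≤
          ∫⁻ y in Set.Ioc 0 s, ‖g y * Real.exp (-(lam * (F s - F y)))‖₊ := by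
        rw [h1]
        exact enorm_integral_le_lintegral_enorm _
      have h3 : ∫⁻ y in Set.Ioc 0 s, (‖g y * Real.exp (-(lam * (F s - F y)))‖₊ : ℝ≥0∞) ≤
          ∫⁻ y in Set.Ioc 0 s, (‖g y‖₊ : ℝ≥0∞) * ENNReal.ofReal (Real.exp (-(c * (s - y)))) := by
        refine lintegral_mono_ae ((ae_restrict_iff' measurableSet_Ioc).2
          (Filter.Eventually.of_forall (fun y hy => ?_)))
        rw [nnnorm_mul, ENNReal.coe_mul]
        refine mul_le_mul_right ?_ _
        rw [← enorm_eq_nnnorm, ← ofReal_norm, Real.norm_eq_abs, Real.abs_exp]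
        apply ENNReal.ofReal_le_ofReal
        apply Real.exp_le_exp.2
        rw [neg_le_neg_iff]
        have := hFgrow y s hy.1.le hy.2
        calc c * (s - y) = lam * (Γ'⁻¹ * (s - y)) := by rw [hcdef]; ring
        _ ≤ lam * (F s - F y) := mul_le_mul_of_nonneg_left this hlam.le
      have h4 : ∫⁻ y in Set.Ioc 0 s, (‖g y‖₊ : ℝ≥0∞) * ENNReal.ofReal (Real.exp (-(c * (s - y))))
          = ∫⁻ y in Set.Ioi 0, T (s, y) := by
        have hTy : ∀ y : ℝ, T (s, y) = (Set.Ioc 0 s).indicator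
            (fun y => (‖g y‖₊ : ℝ≥0∞) * ENNReal.ofReal (Real.exp (-(c * (s - y))))) y := by
          intro y
          by_cases h : 0 < y ∧ y ≤ s
          · rw [hTdef, Set.indicator_of_mem (by exact h : (s, y) ∈ S),
              Set.indicator_of_mem (Set.mem_Ioc.2 h)]
          · rw [hTdef, Set.indicator_of_notMem (by exact h : ¬ (s, y) ∈ S),
              Set.indicator_of_notMem (fun hmem => h (Set.mem_Ioc.1 hmem))]
        have hIJ : Set.Ioc 0 s ∩ Set.Ioi 0 = Set.Ioc 0 s :=
          Set.inter_eq_left.2 Set.Ioc_subset_Ioi_self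
        rw [lintegral_congr hTy, lintegral_indicator measurableSet_Ioc,
          Measure.restrict_restrict measurableSet_Ioc, hIJ]
      exact le_trans h2 (le_trans h3 (le_of_eq h4))
    have stepD : ∀ y : ℝ, ∫⁻ s in Set.Ioi 0, T (s, y) ≤
        (‖g y‖₊ : ℝ≥0∞) * ENNReal.ofReal c⁻¹ := by
      intro y
      by_cases hy : 0 < y
      · have hTy : ∀ s : ℝ, T (s, y) = (Set.Ici y).indicator
            (fun s => (‖g y‖₊ : ℝ≥0∞) * ENNReal.ofReal (Real.exp (-(c * (s - y))))) s := by
          intro s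
          by_cases h : y ≤ s
          · rw [hTdef, Set.indicator_of_mem (by exact ⟨hy, h⟩ : (s, y) ∈ S),
              Set.indicator_of_mem (Set.mem_Ici.2 h)]
          · rw [hTdef, Set.indicator_of_notMem (by exact fun hc' => h hc'.2 : ¬ (s, y) ∈ S),
              Set.indicator_of_notMem (fun hmem => h (Set.mem_Ici.1 hmem))]
        have hIJ : Set.Ici y ∩ Set.Ioi 0 = Set.Ici y :=
          Set.inter_eq_left.2 (fun x hx => lt_of_lt_of_le hy hx)
        rw [lintegral_congr hTy, lintegral_indicator measurableSet_Ici,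
          Measure.restrict_restrict measurableSet_Ici, hIJ,
          ← Measure.restrict_congr_set Ioi_ae_eq_Ici,
          lintegral_const_mul' _ _ ENNReal.coe_ne_top]
      
        refine mul_le_mul_right (le_of_eq ?_) _
        rw [← ofReal_integral_eq_lintegral_ofReal (hexp_int y)
          (Filter.Eventually.of_forall (fun x => (Real.exp_pos _).le)), hexp_val y]
      · have hTy : ∀ s : ℝ, T (s, y) = 0 := by
          intro s
          rw [hTdef, Set.indicator_of_notMem (by exact fun hc' => hy hc'.1 : ¬ (s, y) ∈ S)]
        simp only [hTy]
        simp
    calc ∫⁻ s in Set.Ioi 0, (‖v s‖₊ : ℝ≥0∞)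
        ≤ ∫⁻ s in Set.Ioi 0, ENNReal.ofReal γ0⁻¹ * (‖w s‖₊ : ℝ≥0∞) :=
          lintegral_mono stepA
      _ = ENNReal.ofReal γ0⁻¹ * ∫⁻ s in Set.Ioi 0, (‖w s‖₊ : ℝ≥0∞) :=
          lintegral_const_mul' _ _ ENNReal.ofReal_ne_top
      _ ≤ ENNReal.ofReal γ0⁻¹ * ∫⁻ s in Set.Ioi 0, ∫⁻ y in Set.Ioi 0, T (s, y) := by
          refine mul_le_mul_right (lintegral_mono_ae ((ae_restrict_iff' measurableSet_Ioi).2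
            (Filter.Eventually.of_forall (fun s hs => stepB s hs)))) _
      _ = ENNReal.ofReal γ0⁻¹ * ∫⁻ y in Set.Ioi 0, ∫⁻ s in Set.Ioi 0, T (s, y) := by
          rw [lintegral_lintegral_swap (by exact hTmeas)]
      _ ≤ ENNReal.ofReal γ0⁻¹ * ∫⁻ y in Set.Ioi 0, (‖g y‖₊ : ℝ≥0∞) * ENNReal.ofReal c⁻¹ :=
          mul_le_mul_right (lintegral_mono stepD) _
      _ = ENNReal.ofReal γ0⁻¹ * (ENNReal.ofReal c⁻¹ * ∫⁻ y in Set.Ioi 0, (‖g y‖₊ : ℝ≥0∞)) := by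
          congr 1
          rw [← lintegral_const_mul' (ENNReal.ofReal c⁻¹) _ ENNReal.ofReal_ne_top]
          exact lintegral_congr (fun y => mul_comm _ _)
      _ < ⊤ := by
          refine ENNReal.mul_lt_top ENNReal.ofReal_lt_top
            (ENNReal.mul_lt_top ENNReal.ofReal_lt_top ?_)
          exact hg.2
  refine ⟨v, hvint, hvcont, ?_⟩
  intro s hs
  have hs' : (0:ℝ) ≤ s := hs
  set A : ℝ → ℝ := fun r => lam * φ r * e r with hAdef
  have hAc : Continuous A := (continuous_const.mul hφc).mul hec
  have hA_int : IntegrableOn A (Set.Ioc 0 s) := hAc.integrableOn_Ioc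
  have hB_int : IntegrableOn B (Set.Ioc 0 s) := hBint s hs'
  have hg_int : IntegrableOn g (Set.Ioc 0 s) := hg.mono_set Set.Ioc_subset_Ioi_self
  have hv_int : IntegrableOn v (Set.Ioc 0 s) :=
    ((hvcont.mono (fun x (hx : x ∈ Set.Icc 0 s) => hx.1)).integrableOn_Icc).mono_set
      Set.Ioc_subset_Icc_self
  have hK : ∀ r : ℝ, HasDerivAt (fun t => -(e t)) (A r) r := by
    intro r
    have h1 : HasDerivAt (fun t => -(lam * F t)) (-(lam * φ r)) r := ((hF r).const_mul lam).neg
    have h3 := h1.exp.fun_neg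
    refine h3.congr_deriv ?_
    simp only [hAdef, hedef]
    ring
  have hinner : ∀ y ∈ Set.Ioc 0 s, (∫ r in y..s, A r) = e y - e s := by
    intro y _
    rw [intervalIntegral.integral_eq_sub_of_hasDerivAt (fun r _ => hK r)
      (hAc.intervalIntegrable y s)]
    ring
  set H : ℝ × ℝ → ℝ :=
    Set.indicator {p : ℝ × ℝ | p.2 ≤ p.1} (fun p => A p.1 * B p.2) with hHdef
  have hH_int : Integrable H
      ((volume.restrict (Set.Ioc 0 s)).prod (volume.restrict (Set.Ioc 0 s))) :=
    (Integrable.mul_prod hA_int hB_int).indicator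
      (measurableSet_le measurable_snd measurable_fst)
  have step1 : ∀ r ∈ Set.Ioc 0 s, lam * v r = ∫ y in Set.Ioc 0 s, H (r, y) := by
    intro r hr
    have h1 : ∀ y : ℝ, H (r, y) = Set.indicator (Set.Iic r) (fun y => A r * B y) y := by
      intro y
      by_cases h : y ≤ r
      · rw [hHdef, Set.indicator_of_mem (by exact h : ((r, y) : ℝ × ℝ) ∈ _),
          Set.indicator_of_mem (by exact h)]
      · rw [hHdef, Set.indicator_of_notMem (by exact h),
          Set.indicator_of_notMem (by exact h)]
    calc lam * v r = A r * W r := by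
          rw [hvdef, hwdef, hAdef]
          simp only
          ring
    _ = ∫ y in Set.Ioc 0 r, A r * B y := by rw [hWdef, ← integral_const_mul]
    _ = ∫ y in Set.Ioc 0 s ∩ Set.Iic r, A r * B y := by
        rw [Set.Ioc_inter_Iic, min_eq_right hr.2]
    _ = ∫ y in Set.Ioc 0 s, Set.indicator (Set.Iic r) (fun y => A r * B y) y :=
        (setIntegral_indicator measurableSet_Iic).symm
    _ = ∫ y in Set.Ioc 0 s, H (r, y) :=
        setIntegral_congr_fun measurableSet_Ioc (fun y _ => (h1 y).symm)
  have step3 : ∀ y ∈ Set.Ioc 0 s, (∫ r in Set.Ioc 0 s, H (r, y)) = (e y - e s) * B y := by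
    intro y hy
    have h1 : ∀ r : ℝ, H (r, y) = Set.indicator (Set.Ici y) (fun r => A r * B y) r := by
      intro r
      by_cases h : y ≤ r
      · rw [hHdef, Set.indicator_of_mem (by exact h : ((r, y) : ℝ × ℝ) ∈ _),
          Set.indicator_of_mem (by exact h)]
      · rw [hHdef, Set.indicator_of_notMem (by exact h),
          Set.indicator_of_notMem (by exact h)]
    have h2 : Set.Ioc 0 s ∩ Set.Ici y = Set.Icc y s :=
      Set.ext fun r =>
        ⟨fun hh => ⟨hh.2, hh.1.2⟩, fun hh => ⟨⟨lt_of_lt_of_le hy.1 hh.1, hh.2⟩, hh.1⟩⟩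
    calc (∫ r in Set.Ioc 0 s, H (r, y))
        = ∫ r in Set.Ioc 0 s, Set.indicator (Set.Ici y) (fun r => A r * B y) r :=
          setIntegral_congr_fun measurableSet_Ioc (fun r _ => h1 r)
    _ = ∫ r in Set.Ioc 0 s ∩ Set.Ici y, A r * B y := setIntegral_indicator measurableSet_Ici
    _ = ∫ r in Set.Icc y s, A r * B y := by rw [h2]
    _ = (∫ r in Set.Icc y s, A r) * B y := by rw [integral_mul_const]
    _ = (∫ r in y..s, A r) * B y := by
        rw [intervalIntegral.integral_of_le hy.2, integral_Icc_eq_integral_Ioc]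
    _ = (e y - e s) * B y := by rw [hinner y hy]
  have key : (∫ r in Set.Ioc 0 s, lam * v r) = (∫ y in Set.Ioc 0 s, g y) - e s * W s := by
    calc (∫ r in Set.Ioc 0 s, lam * v r)
        = ∫ r in Set.Ioc 0 s, ∫ y in Set.Ioc 0 s, H (r, y) :=
          setIntegral_congr_fun measurableSet_Ioc (fun r hr => step1 r hr)
    _ = ∫ y in Set.Ioc 0 s, ∫ r in Set.Ioc 0 s, H (r, y) := integral_integral_swap hH_int
    _ = ∫ y in Set.Ioc 0 s, (e y - e s) * B y := setIntegral_congr_fun measurableSet_Ioc step3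
    _ = ∫ y in Set.Ioc 0 s, (g y - e s * B y) := by
        refine setIntegral_congr_fun measurableSet_Ioc (fun y _ => ?_)
        rw [sub_mul]
        congr 1
        rw [hedef, hBdef]
        simp only
        rw [mul_comm (g y) _, ← mul_assoc, ← Real.exp_add]
        simp
    _ = (∫ y in Set.Ioc 0 s, g y) - e s * W s := by
        rw [integral_sub hg_int (hB_int.const_mul (e s)), hWdef, integral_const_mul]
  have hlhs : γ s * v s = e s * W s := by
    show γ s * (φ s * (e s * W s)) = e s * W s
    rw [← mul_assoc, hφγ s hs', one_mul]
  rw [hlhs, integral_sub hg_int (hv_int.const_mul lam), key]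
  ring



end helpers

/-- For `γ ∈ W^{1,∞}(0,∞)` with `0 < γ₀ ≤ γ ≤ Γ` and any nonzero nonnegative
`h ∈ L¹(0,∞)`, the function `u(s) = (1/γ(s)) ∫_0^s h` is not in `L¹(0,∞)`;
consequently `0 ∈ σ(A₀)` for `A₀u = -(γu)'`, `u(0)=0` (the resolvent equation at
`λ = 0` has no `L¹` solution), while the resolvent equation is solvable for every
`λ > 0`, so that `s(A₀) = 0`. -/
theorem stmt10 (γ0 Γ : ℝ) (hγ0 : 0 < γ0) (γ h : ℝ → ℝ)
    (hγlip : ∃ L : NNReal, LipschitzWith L γ)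
    (hγlb : ∀ s ∈ Set.Ici (0 : ℝ), γ0 ≤ γ s)
    (hγub : ∀ s ∈ Set.Ici (0 : ℝ), γ s ≤ Γ)
    (hh : IntegrableOn h (Set.Ioi 0))
    (hhnonneg : ∀ᵐ y ∂(volume.restrict (Set.Ioi 0)), 0 ≤ h y)
    (hhne : ¬ (∀ᵐ y ∂(volume.restrict (Set.Ioi 0)), h y = 0)) :
    (¬ IntegrableOn (fun s => (γ s)⁻¹ * ∫ y in Set.Ioc 0 s, h y) (Set.Ioi 0)) ∧
    (¬ ∃ v : ℝ → ℝ, IntegrableOn v (Set.Ioi 0) ∧ ContinuousOn v (Set.Ici 0) ∧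
        ∀ s ∈ Set.Ici (0 : ℝ), γ s * v s = ∫ y in Set.Ioc 0 s, h y) ∧
    (∀ lam : ℝ, 0 < lam → ∀ g : ℝ → ℝ, IntegrableOn g (Set.Ioi 0) →
      ∃ v : ℝ → ℝ, IntegrableOn v (Set.Ioi 0) ∧ ContinuousOn v (Set.Ici 0) ∧
        ∀ s ∈ Set.Ici (0 : ℝ), γ s * v s = ∫ y in Set.Ioc 0 s, (g y - lam * v y)) := by
  have hP1 := part1 γ0 Γ hγ0 γ h hγlb hγub hh hhnonneg hhne
  refine ⟨hP1, ?_, ?_⟩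
  · rintro ⟨v, hvint, hvcont, hveq⟩
    apply hP1
    refine hvint.congr_fun (fun s hs => ?_) measurableSet_Ioi
    have hs' : (0:ℝ) ≤ s := le_of_lt hs
    have hγs : (0:ℝ) < γ s := lt_of_lt_of_le hγ0 (hγlb s hs')
    have := hveq s hs'
    field_simp
    rw [mul_comm]
    exact hveq s hs'
  · intro lam hlam g hg
    obtain ⟨L, hL⟩ := hγlip
    exact part3 γ0 Γ lam hγ0 hlam γ g hL.continuous hγlb hγub hg
end

section
/- Let $\mu \in L^\infty(0,\infty)$ be nonnegative with $\liminf_{x\to\infty}\mu(x) =: \ell$, let $\gamma \in W^{1,\infty}(0,\infty)$ with $\gamma \geq \gamma_0 > 0$, and let $\varepsilon > 0$, $\lambda := -\ell + \varepsilon$. Then for every $h \in L^1(0,\infty)$ the function $u(s) = \frac{1}{\gamma(s)}\int_0^s h(y)\exp\left(-\int_y^s \frac{\lambda + \mu(z)}{\gamma(z)}\,dz\right)dy$ belongs to $L^1(0,\infty)$. -/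
open MeasureTheory intervalIntegral Set
open scoped ENNReal NNReal

lemma keyineq {d : ℝ} (h0 : 0 ≤ d) (h1 : d ≤ 1) : d ≤ Real.exp 1 * (1 - Real.exp (-d)) := by
  have h2 : d + 1 ≤ Real.exp d := Real.add_one_le_exp d
  have h3 : Real.exp (-1 : ℝ) ≤ Real.exp (-d) := Real.exp_le_exp.2 (by linarith)
  have h4 : Real.exp (-d) * Real.exp d = 1 := by rw [← Real.exp_add]; simp
  have h5 : Real.exp (-1 : ℝ) * Real.exp 1 = 1 := by rw [← Real.exp_add]; simp
  have h6 : 0 < Real.exp (-d) := Real.exp_pos _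
  have h7 : 0 < Real.exp (1 : ℝ) := Real.exp_pos _
  nlinarith [mul_le_mul_of_nonneg_left h2 h6.le, mul_le_mul_of_nonneg_left h3 h0,
    mul_le_mul_of_nonneg_left h3 h7.le]

lemma lemA (g : ℝ → ℝ) (a B : ℝ) (hB : 0 < B) (hmg : Measurable g)
    (h0 : ∀ z, a ≤ z → 0 ≤ g z) (hgB : ∀ z, a ≤ z → g z ≤ B) :
    ∀ T, a ≤ T → ∫ s in a..T, g s * Real.exp (-(∫ z in a..s, g z)) ≤ Real.exp 1 := by
  set F : ℝ → ℝ := fun t => ∫ z in a..t, g z with hF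
  have hint : ∀ t1 t2, a ≤ t1 → t1 ≤ t2 → IntervalIntegrable g volume t1 t2 := by
    intro t1 t2 ht1 ht12
    have : IntegrableOn g (Ioc t1 t2) := by
      apply Integrable.mono' (integrable_const B) (hmg.aestronglyMeasurable.restrict)
      filter_upwards [ae_restrict_mem measurableSet_Ioc] with z hz
      rw [Real.norm_eq_abs, abs_of_nonneg (h0 z (ht1.trans hz.1.le))]
      exact hgB z (ht1.trans hz.1.le)
    exact (intervalIntegrable_iff_integrableOn_Ioc_of_le ht12).2 this
  have hFd : ∀ t1 t2, a ≤ t1 → t1 ≤ t2 → F t2 - F t1 = ∫ z in t1..t2, g z := by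
    intro t1 t2 ht1 ht12
    exact integral_interval_sub_left (hint a t2 le_rfl (ht1.trans ht12)) (hint a t1 le_rfl ht1)
  have hFmono : ∀ t1 t2, a ≤ t1 → t1 ≤ t2 → F t1 ≤ F t2 := by
    intro t1 t2 ht1 ht12
    have h := hFd t1 t2 ht1 ht12
    have : 0 ≤ ∫ z in t1..t2, g z :=
      intervalIntegral.integral_nonneg ht12 (fun x hx => h0 x (ht1.trans hx.1))
    linarith
  have hFub : ∀ t1 t2, a ≤ t1 → t1 ≤ t2 → F t2 - F t1 ≤ B * (t2 - t1) := by
    intro t1 t2 ht1 ht12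
    rw [hFd t1 t2 ht1 ht12]
    calc (∫ z in t1..t2, g z) ≤ ∫ _z in t1..t2, B :=
          intervalIntegral.integral_mono_on ht12 (hint t1 t2 ht1 ht12)
            intervalIntegrable_const (fun x hx => hgB x (ht1.trans hx.1))
      _ = B * (t2 - t1) := by simp [mul_comm]
  have hF0 : ∀ t, a ≤ t → 0 ≤ F t := by
    intro t ht
    have : F a = 0 := by simp [hF]
    have := hFmono a t le_rfl ht; linarith
  have hFcont : ContinuousOn F (Ici a) := by
    apply LipschitzOnWith.continuousOn (K := Real.toNNReal B)
    apply LipschitzOnWith.of_dist_le_mul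
    intro x hx y hy
    rcases le_total y x with hxy | hxy
    · rw [Real.dist_eq, Real.dist_eq, abs_of_nonneg (by linarith [hFmono y x hy hxy] : (0:ℝ) ≤ F x - F y),
        abs_of_nonneg (by linarith : (0:ℝ) ≤ x - y)]
      have := hFub y x hy hxy
      calc F x - F y ≤ B * (x - y) := this
        _ ≤ Real.toNNReal B * (x - y) := by
            rw [Real.coe_toNNReal B hB.le]
    · rw [Real.dist_eq, Real.dist_eq, abs_sub_comm, abs_sub_comm x y,
        abs_of_nonneg (by linarith [hFmono x y hx hxy] : (0:ℝ) ≤ F y - F x),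
        abs_of_nonneg (by linarith : (0:ℝ) ≤ y - x)]
      have := hFub x y hx hxy
      calc F y - F x ≤ B * (y - x) := this
        _ ≤ Real.toNNReal B * (y - x) := by rw [Real.coe_toNNReal B hB.le]
  have hGint : ∀ t1 t2, a ≤ t1 → t1 ≤ t2 →
      IntervalIntegrable (fun s => g s * Real.exp (-(F s))) volume t1 t2 := by
    intro t1 t2 ht1 ht12
    have hsub : Ioc t1 t2 ⊆ Ici a := fun x hx => le_trans ht1 hx.1.le
    have hmeas : AEStronglyMeasurable (fun s => g s * Real.exp (-(F s)))
        (volume.restrict (Ioc t1 t2)) := by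
      apply AEStronglyMeasurable.mul hmg.aestronglyMeasurable.restrict
      have : ContinuousOn (fun s => Real.exp (-(F s))) (Ici a) :=
        Real.continuous_exp.comp_continuousOn hFcont.neg
      exact (this.aestronglyMeasurable measurableSet_Ici).mono_measure
        (Measure.restrict_mono hsub le_rfl)
    have : IntegrableOn (fun s => g s * Real.exp (-(F s))) (Ioc t1 t2) := by
      apply Integrable.mono' (integrable_const B) hmeas
      filter_upwards [ae_restrict_mem measurableSet_Ioc] with z hz
      have hza : a ≤ z := hsub hz
      rw [Real.norm_eq_abs, abs_of_nonneg (mul_nonneg (h0 z hza) (Real.exp_pos _).le)]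
      calc g z * Real.exp (-(F z)) ≤ B * 1 := by
            apply mul_le_mul (hgB z hza) _ (Real.exp_pos _).le hB.le
            rw [← Real.exp_zero]
            exact Real.exp_le_exp.2 (by linarith [hF0 z hza])
        _ = B := mul_one B
    exact (intervalIntegrable_iff_integrableOn_Ioc_of_le ht12).2 this
  have key : ∀ n : ℕ, ∫ s in a..(a + n * B⁻¹), g s * Real.exp (-(F s)) ≤
      Real.exp 1 * (1 - Real.exp (-(F (a + n * B⁻¹)))) := by
    intro n; induction n with
    | zero => simp [hF]
    | succ n ih =>
      set p := a + n * B⁻¹ with hp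
      set q := a + (n + 1 : ℕ) * B⁻¹ with hq
      have hap : a ≤ p := le_add_of_nonneg_right (by positivity)
      have hpq : p ≤ q := by
        rw [hp, hq]
        have : (n : ℝ) * B⁻¹ ≤ ((n : ℝ) + 1) * B⁻¹ := by
          apply mul_le_mul_of_nonneg_right (by linarith) (by positivity)
        push_cast; linarith
      have haq : a ≤ q := hap.trans hpq
      have hsplit : ∫ s in a..q, g s * Real.exp (-(F s)) =
          (∫ s in a..p, g s * Real.exp (-(F s))) + ∫ s in p..q, g s * Real.exp (-(F s)) :=
        (integral_add_adjacent_intervals (hGint a p le_rfl hap) (hGint p q hap hpq)).symm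
      have hqp : q - p = B⁻¹ := by rw [hp, hq]; push_cast; ring
      have hΔ1 : F q - F p ≤ 1 := by
        have := hFub p q hap hpq
        rw [hqp] at this
        rw [mul_inv_cancel₀ hB.ne'] at this
        linarith
      have hΔ0 : 0 ≤ F q - F p := by linarith [hFmono p q hap hpq]
      have step : ∫ s in p..q, g s * Real.exp (-(F s)) ≤ Real.exp (-(F p)) * (F q - F p) := by
        have hle : ∫ s in p..q, g s * Real.exp (-(F s)) ≤ ∫ s in p..q, g s * Real.exp (-(F p)) := by
          apply intervalIntegral.integral_mono_on hpq (hGint p q hap hpq)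
            ((hint p q hap hpq).mul_const _)
          intro x hx
          apply mul_le_mul_of_nonneg_left _ (h0 x (hap.trans hx.1))
          exact Real.exp_le_exp.2 (neg_le_neg (hFmono p x hap hx.1))
        rw [intervalIntegral.integral_mul_const, ← hFd p q hap hpq] at hle
        linarith
      have h8 : Real.exp (-(F p)) * Real.exp (-(F q - F p)) = Real.exp (-(F q)) := by
        rw [← Real.exp_add]; ring_nf
      have step2 : Real.exp (-(F p)) * (F q - F p) ≤
          Real.exp 1 * (Real.exp (-(F p)) - Real.exp (-(F q))) := by
        calc Real.exp (-(F p)) * (F q - F p)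
            ≤ Real.exp (-(F p)) * (Real.exp 1 * (1 - Real.exp (-(F q - F p)))) :=
              mul_le_mul_of_nonneg_left (keyineq hΔ0 hΔ1) (Real.exp_pos _).le
          _ = Real.exp 1 * (Real.exp (-(F p)) - Real.exp (-(F q))) := by rw [← h8]; ring
      rw [hsplit]
      calc (∫ s in a..p, g s * Real.exp (-(F s))) + ∫ s in p..q, g s * Real.exp (-(F s))
          ≤ Real.exp 1 * (1 - Real.exp (-(F p))) + Real.exp (-(F p)) * (F q - F p) := by
            exact add_le_add ih step
        _ ≤ Real.exp 1 * (1 - Real.exp (-(F p))) +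
            Real.exp 1 * (Real.exp (-(F p)) - Real.exp (-(F q))) := by linarith
        _ = Real.exp 1 * (1 - Real.exp (-(F q))) := by ring
  intro T hT
  set n := ⌈(T - a) * B⌉₊ with hn
  have hTn : T ≤ a + n * B⁻¹ := by
    have h1 : (T - a) * B ≤ n := Nat.le_ceil _
    have h2 : (T - a) * B * B⁻¹ ≤ n * B⁻¹ :=
      mul_le_mul_of_nonneg_right h1 (by positivity)
    rw [mul_assoc, mul_inv_cancel₀ hB.ne', mul_one] at h2
    linarith
  have h1 : ∫ s in a..(a + n * B⁻¹), g s * Real.exp (-(F s)) =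
      (∫ s in a..T, g s * Real.exp (-(F s))) + ∫ s in T..(a + n * B⁻¹), g s * Real.exp (-(F s)) :=
    (integral_add_adjacent_intervals (hGint a T le_rfl hT) (hGint T _ hT hTn)).symm
  have h2 : 0 ≤ ∫ s in T..(a + n * B⁻¹), g s * Real.exp (-(F s)) :=
    intervalIntegral.integral_nonneg hTn
      (fun x hx => mul_nonneg (h0 x (hT.trans hx.1)) (Real.exp_pos _).le)
  have h3 := key n
  have h4 : 0 ≤ Real.exp (-(F (a + n * B⁻¹))) := (Real.exp_pos _).le
  have h5 : (0:ℝ) < Real.exp 1 := Real.exp_pos _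
  nlinarith

lemma intgB (g : ℝ → ℝ) (a B : ℝ) (hmg : Measurable g) (hgB : ∀ z, a ≤ z → |g z| ≤ B)
    {t1 t2 : ℝ} (ht1 : a ≤ t1) (ht12 : t1 ≤ t2) : IntervalIntegrable g volume t1 t2 := by
  have : IntegrableOn g (Ioc t1 t2) := by
    apply Integrable.mono' (integrable_const B) (hmg.aestronglyMeasurable.restrict)
    filter_upwards [ae_restrict_mem measurableSet_Ioc] with z hz
    exact (Real.norm_eq_abs _).le.trans (hgB z (ht1.trans hz.1.le))
  exact (intervalIntegrable_iff_integrableOn_Ioc_of_le ht12).2 this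

lemma contPrim (g : ℝ → ℝ) (a B : ℝ) (hB : 0 ≤ B) (hmg : Measurable g)
    (hgB : ∀ z, a ≤ z → |g z| ≤ B) :
    ContinuousOn (fun t => ∫ z in a..t, g z) (Ici a) := by
  apply LipschitzOnWith.continuousOn (K := Real.toNNReal B)
  apply LipschitzOnWith.of_dist_le_mul
  intro x hx y hy
  have hGd : (∫ z in a..x, g z) - ∫ z in a..y, g z = ∫ z in y..x, g z :=
    integral_interval_sub_left (intgB g a B hmg hgB le_rfl hx) (intgB g a B hmg hgB le_rfl hy)
  rw [Real.dist_eq, Real.dist_eq, hGd, Real.coe_toNNReal B hB]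
  have : ‖∫ z in y..x, g z‖ ≤ B * |x - y| := by
    apply intervalIntegral.norm_integral_le_of_norm_le_const
    intro z hz
    rcases le_total y x with hyx | hyx
    · rw [uIoc_of_le hyx] at hz
      exact (Real.norm_eq_abs _).le.trans (hgB z ((le_max_iff.2 (Or.inl hy)).trans
        (by simp [hz.1.le] : max y y ≤ z)))
    · rw [uIoc_of_ge hyx] at hz
      exact (Real.norm_eq_abs _).le.trans (hgB z (hx.trans hz.1.le))
  exact (Real.norm_eq_abs _).symm.le.trans this


lemma lemAint (g : ℝ → ℝ) (a B : ℝ) (hB : 0 < B) (hmg : Measurable g)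
    (hgB : ∀ z, a ≤ z → |g z| ≤ B) {t1 t2 : ℝ} (ht1 : a ≤ t1) (ht12 : t1 ≤ t2) :
    IntervalIntegrable (fun s => g s * Real.exp (-(∫ z in a..s, g z))) volume t1 t2 := by
  set F : ℝ → ℝ := fun t => ∫ z in a..t, g z with hF
  have hsub : Ioc t1 t2 ⊆ Ici a := fun x hx => le_trans ht1 hx.1.le
  have hmeas : AEStronglyMeasurable (fun s => g s * Real.exp (-(F s)))
      (volume.restrict (Ioc t1 t2)) := by
    apply AEStronglyMeasurable.mul hmg.aestronglyMeasurable.restrict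
    have : ContinuousOn (fun s => Real.exp (-(F s))) (Ici a) :=
      Real.continuous_exp.comp_continuousOn (contPrim g a B hB.le hmg hgB).neg
    exact (this.aestronglyMeasurable measurableSet_Ici).mono_measure
      (Measure.restrict_mono hsub le_rfl)
  have hFlb : ∀ s, a ≤ s → -(B * (s - a)) ≤ F s := by
    intro s hs
    have : ‖F s‖ ≤ B * |s - a| := by
      apply intervalIntegral.norm_integral_le_of_norm_le_const
      intro z hz
      rw [uIoc_of_le hs] at hz
      exact (Real.norm_eq_abs _).le.trans (hgB z hz.1.le)
    rw [abs_of_nonneg (by linarith)] at this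
    have := (abs_le.1 ((Real.norm_eq_abs _) ▸ this)).1
    linarith
  have : IntegrableOn (fun s => g s * Real.exp (-(F s))) (Ioc t1 t2) := by
    apply Integrable.mono' (integrable_const (B * Real.exp (B * (t2 - a)))) hmeas
    filter_upwards [ae_restrict_mem measurableSet_Ioc] with z hz
    have hza : a ≤ z := hsub hz
    rw [Real.norm_eq_abs, abs_mul, abs_of_nonneg (Real.exp_pos _).le]
    apply mul_le_mul (hgB z hza) _ (Real.exp_pos _).le
      (le_trans (abs_nonneg _) (hgB z hza))
    apply Real.exp_le_exp.2
    have := hFlb z hza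
    have hz2 : z ≤ t2 := hz.2
    nlinarith
  exact (intervalIntegrable_iff_integrableOn_Ioc_of_le ht12).2 this

lemma lemB (g γF : ℝ → ℝ) (γ0 c2 B R : ℝ) (hγ0 : 0 < γ0) (hc2 : 0 < c2) (hB : 0 < B)
    (hR : 0 ≤ R) (hmg : Measurable g) (hγcont : ContinuousOn γF (Ici 0))
    (hγlb : ∀ s, 0 ≤ s → γ0 ≤ γF s)
    (hgB : ∀ z, 0 ≤ z → |g z| ≤ B)
    (hgpos : ∀ z, R ≤ z → 0 ≤ g z)
    (hginv : ∀ s, R ≤ s → (γF s)⁻¹ ≤ c2⁻¹ * g s)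
    (y : ℝ) (hy : 0 < y) :
    IntegrableOn (fun s => (γF s)⁻¹ * Real.exp ((∫ z in (0:ℝ)..y, g z) - ∫ z in (0:ℝ)..s, g z))
      (Ioi y) ∧
    (∫ s in Ioi y, (γF s)⁻¹ * Real.exp ((∫ z in (0:ℝ)..y, g z) - ∫ z in (0:ℝ)..s, g z)) ≤
      Real.exp (B * R) * (R / γ0 + c2⁻¹ * Real.exp 1) := by
  set G : ℝ → ℝ := fun t => ∫ z in (0:ℝ)..t, g z with hG
  set f : ℝ → ℝ := fun s => (γF s)⁻¹ * Real.exp (G y - G s) with hf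
  set m : ℝ := max y R with hm
  set C : ℝ := Real.exp (B * R) * (R / γ0 + c2⁻¹ * Real.exp 1) with hC
  have hym : y ≤ m := le_max_left _ _
  have hRm : R ≤ m := le_max_right _ _
  have h0m : 0 ≤ m := hy.le.trans hym
  have hmy : m - y ≤ R := by
    rcases le_total y R with hc | hc
    · simp only [hm, max_eq_right hc]; linarith
    · simp only [hm, max_eq_left hc]; linarith
  have hGd : ∀ t1 t2, 0 ≤ t1 → 0 ≤ t2 → G t2 - G t1 = ∫ z in t1..t2, g z := fun t1 t2 h1 h2 =>
    integral_interval_sub_left (intgB g 0 B hmg (fun z hz => hgB z hz) le_rfl h2)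
      (intgB g 0 B hmg (fun z hz => hgB z hz) le_rfl h1)
  have hGlip : ∀ t1 t2, 0 ≤ t1 → t1 ≤ t2 → |G t2 - G t1| ≤ B * (t2 - t1) := by
    intro t1 t2 h1 h12
    rw [hGd t1 t2 h1 (h1.trans h12)]
    have : ‖∫ z in t1..t2, g z‖ ≤ B * |t2 - t1| := by
      apply intervalIntegral.norm_integral_le_of_norm_le_const
      intro z hz
      rw [uIoc_of_le h12] at hz
      exact (Real.norm_eq_abs _).le.trans (hgB z (h1.trans hz.1.le))
    have h12' : |t2 - t1| = t2 - t1 := abs_of_nonneg (by linarith)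
    rw [Real.norm_eq_abs, h12'] at this
    exact this
  -- continuity of f on Ici y
  have hGcont : ContinuousOn G (Ici 0) := contPrim g 0 B hB.le hmg (fun z hz => hgB z hz)
  have hIy : Ici y ⊆ Ici (0:ℝ) := fun x hx => le_trans hy.le hx
  have hfcont : ContinuousOn f (Ici y) := by
    apply ContinuousOn.mul
    · apply ContinuousOn.inv₀ (hγcont.mono hIy)
      intro x hx
      exact ne_of_gt (lt_of_lt_of_le hγ0 (hγlb x (hIy hx)))
    · exact Real.continuous_exp.comp_continuousOn
        ((continuousOn_const.sub (hGcont.mono hIy)))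
  have hfi : ∀ T : ℝ, IntegrableOn f (Ioc y T) := by
    intro T
    rcases le_total T y with hT | hT
    · rw [Ioc_eq_empty (by exact not_lt.2 hT)]; exact integrableOn_empty
    · exact (hfcont.mono (Icc_subset_Ici_self)).integrableOn_Icc.mono_set Ioc_subset_Icc_self
  have hfnn : ∀ s, y ≤ s → 0 ≤ f s := by
    intro s hs
    have : 0 < γF s := lt_of_lt_of_le hγ0 (hγlb s (hy.le.trans hs))
    positivity
  have hfIT : ∀ t1 t2, y ≤ t1 → t1 ≤ t2 → IntervalIntegrable f volume t1 t2 := by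
    intro t1 t2 h1 h12
    apply ContinuousOn.intervalIntegrable_of_Icc h12
    exact hfcont.mono (fun x hx => h1.trans hx.1)
  -- the key bound for T ≥ m
  have hbnd : ∀ T, m ≤ T → (∫ s in y..T, f s) ≤ C := by
    intro T hmT
    have hyT : y ≤ T := hym.trans hmT
    have hsplit : ∫ s in y..T, f s = (∫ s in y..m, f s) + ∫ s in m..T, f s :=
      (integral_add_adjacent_intervals (hfIT y m le_rfl hym) (hfIT m T hym hmT)).symm
    have part1 : (∫ s in y..m, f s) ≤ R * (γ0⁻¹ * Real.exp (B * R)) := by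
      have hle : (∫ s in y..m, f s) ≤ ∫ _s in y..m, γ0⁻¹ * Real.exp (B * R) := by
        apply intervalIntegral.integral_mono_on hym (hfIT y m le_rfl hym) intervalIntegrable_const
        intro x hx
        have hx0 : 0 ≤ x := hy.le.trans hx.1
        have h1 : (γF x)⁻¹ ≤ γ0⁻¹ := by
          apply inv_anti₀ hγ0 (hγlb x hx0)
        have h2 : Real.exp (G y - G x) ≤ Real.exp (B * R) := by
          apply Real.exp_le_exp.2
          have := (abs_le.1 (hGlip y x hy.le hx.1)).1
          nlinarith [hx.2, hmy]
        have : 0 < γF x := lt_of_lt_of_le hγ0 (hγlb x hx0)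
        calc f x = (γF x)⁻¹ * Real.exp (G y - G x) := rfl
          _ ≤ γ0⁻¹ * Real.exp (B * R) :=
            mul_le_mul h1 h2 (Real.exp_pos _).le (by positivity)
      rw [intervalIntegral.integral_const, smul_eq_mul] at hle
      have : (m - y) * (γ0⁻¹ * Real.exp (B * R)) ≤ R * (γ0⁻¹ * Real.exp (B * R)) := by
        apply mul_le_mul_of_nonneg_right hmy (by positivity)
      linarith
    have part2 : (∫ s in m..T, f s) ≤ Real.exp (B * R) * c2⁻¹ * Real.exp 1 := by
      have hAi : IntervalIntegrable (fun s => g s * Real.exp (-(∫ z in m..s, g z))) volume m T :=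
        lemAint g m B hB hmg (fun z hz => hgB z (h0m.trans hz)) le_rfl hmT
      have hle : (∫ s in m..T, f s) ≤
          ∫ s in m..T, (Real.exp (B * R) * c2⁻¹) * (g s * Real.exp (-(∫ z in m..s, g z))) := by
        apply intervalIntegral.integral_mono_on hmT (hfIT m T hym hmT) (hAi.const_mul _)
        intro x hx
        have hx0 : 0 ≤ x := h0m.trans hx.1
        have hRx : R ≤ x := hRm.trans hx.1
        have h1 : (γF x)⁻¹ ≤ c2⁻¹ * g x := hginv x hRx
        have hGyx : G y - G x ≤ B * R + -(∫ z in m..x, g z) := by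
          have e1 : G x - G m = ∫ z in m..x, g z := hGd m x h0m hx0
          have e2 := (abs_le.1 (hGlip y m hy.le hym)).1
          have e3 : B * (m - y) ≤ B * R := mul_le_mul_of_nonneg_left hmy hB.le
          linarith
        have h3 : Real.exp (G y - G x) ≤
            Real.exp (B * R) * Real.exp (-(∫ z in m..x, g z)) := by
          rw [← Real.exp_add]
          exact Real.exp_le_exp.2 hGyx
        have hγpos : 0 < γF x := lt_of_lt_of_le hγ0 (hγlb x hx0)
        have hgx : 0 ≤ g x := hgpos x hRx
        calc f x = (γF x)⁻¹ * Real.exp (G y - G x) := rfl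
          _ ≤ (c2⁻¹ * g x) * (Real.exp (B * R) * Real.exp (-(∫ z in m..x, g z))) :=
            mul_le_mul h1 h3 (Real.exp_pos _).le (by positivity)
          _ = (Real.exp (B * R) * c2⁻¹) * (g x * Real.exp (-(∫ z in m..x, g z))) := by ring
      rw [intervalIntegral.integral_const_mul] at hle
      have hA := lemA g m B hB hmg (fun z hz => hgpos z (hRm.trans hz))
        (fun z hz => le_trans (le_abs_self _) (hgB z (h0m.trans hz))) T hmT
      have hpos : (0:ℝ) ≤ Real.exp (B * R) * c2⁻¹ := by positivity
      calc (∫ s in m..T, f s) ≤ (Real.exp (B * R) * c2⁻¹) *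
            ∫ s in m..T, g s * Real.exp (-(∫ z in m..s, g z)) := hle
        _ ≤ (Real.exp (B * R) * c2⁻¹) * Real.exp 1 := mul_le_mul_of_nonneg_left hA hpos
    rw [hsplit, hC]
    have : Real.exp (B*R) * (R / γ0 + c2⁻¹ * Real.exp 1)
        = R * (γ0⁻¹ * Real.exp (B*R)) + Real.exp (B*R) * c2⁻¹ * Real.exp 1 := by
      field_simp
    rw [this]
    exact add_le_add part1 part2
  -- conclude
  have hbnd' : ∀ᶠ T in Filter.atTop, (∫ s in y..T, ‖f s‖) ≤ C := by
    filter_upwards [Filter.eventually_ge_atTop m] with T hT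
    have : (∫ s in y..T, ‖f s‖) = ∫ s in y..T, f s := by
      apply intervalIntegral.integral_congr
      intro x hx
      rw [uIcc_of_le (hym.trans hT)] at hx
      exact Real.norm_of_nonneg (hfnn x hx.1)
    rw [this]; exact hbnd T hT
  have hInt : IntegrableOn f (Ioi y) :=
    integrableOn_Ioi_of_intervalIntegral_norm_bounded C y hfi Filter.tendsto_id hbnd'
  refine ⟨hInt, ?_⟩
  have htend := intervalIntegral_tendsto_integral_Ioi y hInt Filter.tendsto_id
  apply le_of_tendsto htend
  filter_upwards [Filter.eventually_ge_atTop m] with T hT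
  exact hbnd T hT


lemma intgAll (g : ℝ → ℝ) (B : ℝ) (hmg : Measurable g) (hgB : ∀ z, |g z| ≤ B)
    (t1 t2 : ℝ) : IntervalIntegrable g volume t1 t2 := by
  rw [intervalIntegrable_iff]
  haveI : IsFiniteMeasure (volume.restrict (Set.uIoc t1 t2)) :=
    ⟨by rw [Measure.restrict_apply_univ, Set.uIoc]; exact measure_Ioc_lt_top⟩
  apply Integrable.mono' (integrable_const B) hmg.aestronglyMeasurable.restrict
  filter_upwards with z using (Real.norm_eq_abs _).le.trans (hgB z)

lemma contPrimAll (g : ℝ → ℝ) (B : ℝ) (hB : 0 ≤ B) (hmg : Measurable g)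
    (hgB : ∀ z, |g z| ≤ B) : Continuous (fun t => ∫ z in (0:ℝ)..t, g z) := by
  apply LipschitzWith.continuous (K := Real.toNNReal B)
  apply LipschitzWith.of_dist_le_mul
  intro x y
  have hd : (∫ z in (0:ℝ)..x, g z) - ∫ z in (0:ℝ)..y, g z = ∫ z in y..x, g z :=
    integral_interval_sub_left (intgAll g B hmg hgB 0 x) (intgAll g B hmg hgB 0 y)
  rw [Real.dist_eq, Real.dist_eq, hd, Real.coe_toNNReal B hB]
  have := intervalIntegral.norm_integral_le_of_norm_le_const (C := B) (a := y) (b := x)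
    (f := g) (fun z _ => (Real.norm_eq_abs _).le.trans (hgB z))
  simpa [Real.norm_eq_abs] using this

set_option maxHeartbeats 1000000 in
/-- For `λ = -liminf_{x→∞} μ(x) + ε` with `ε > 0`, and any `h ∈ L¹(0,∞)`, the function
`u(s) = (1/γ(s)) ∫_0^s h(y) exp(-∫_y^s (λ+μ(z))/γ(z) dz) dy` belongs to `L¹(0,∞)`. -/
theorem stmt11 (γ0 ε : ℝ) (hγ0 : 0 < γ0) (hε : 0 < ε) (γ μ h : ℝ → ℝ)
    (hγlip : ∃ L : NNReal, LipschitzWith L γ)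
    (hγlb : ∀ s ∈ Set.Ici (0 : ℝ), γ0 ≤ γ s)
    (hμmeas : Measurable μ) (hμnonneg : ∀ x, 0 ≤ μ x)
    (hμbdd : ∃ M : ℝ, ∀ x, μ x ≤ M)
    (hh : IntegrableOn h (Set.Ioi 0)) :
    IntegrableOn
      (fun s => (γ s)⁻¹ * ∫ y in Set.Ioc 0 s,
        h y * Real.exp (-∫ z in y..s,
          ((-(Filter.liminf μ Filter.atTop) + ε) + μ z) / γ z))
      (Set.Ioi 0) := by
  obtain ⟨L, hL⟩ := hγlip
  obtain ⟨M, hM⟩ := hμbdd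
  have hγc : Continuous γ := hL.continuous
  have hM0 : (0:ℝ) ≤ M := le_trans (hμnonneg 0) (hM 0)
  set lam : ℝ := -(Filter.liminf μ Filter.atTop) + ε with hlam
  set gh : ℝ → ℝ := fun z => if 0 ≤ z then (lam + μ z) / γ z else 0 with hgh
  have hghm : Measurable gh := Measurable.ite (measurableSet_le measurable_const measurable_id)
    ((measurable_const.add hμmeas).div hγc.measurable) measurable_const
  set B : ℝ := (|lam| + M) / γ0 + 1 with hB
  have hBpos : 0 < B := by positivity
  have hghB : ∀ z, |gh z| ≤ B := by
    intro z
    by_cases hz : 0 ≤ z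
    · simp only [hgh, if_pos hz]
      have h1 : γ0 ≤ γ z := hγlb z hz
      have h2 : |lam + μ z| ≤ |lam| + M := by
        have h3 := abs_add_le lam (μ z)
        rw [abs_of_nonneg (hμnonneg z)] at h3
        linarith [hM z]
      rw [abs_div, abs_of_pos (lt_of_lt_of_le hγ0 h1)]
      have := div_le_div₀ (by positivity) h2 hγ0 h1
      linarith
    · simp only [hgh, if_neg hz, abs_zero]; positivity
  set Gh : ℝ → ℝ := fun t => ∫ z in (0:ℝ)..t, gh z with hGhdef
  have hGhc : Continuous Gh := contPrimAll gh B hBpos.le hghm hghB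
  have hGhd : ∀ t1 t2 : ℝ, Gh t2 - Gh t1 = ∫ z in t1..t2, gh z := fun t1 t2 =>
    integral_interval_sub_left (intgAll gh B hghm hghB 0 t2) (intgAll gh B hghm hghB 0 t1)
  have hGhbd : ∀ t, |Gh t| ≤ B * |t| := by
    intro t
    have := intervalIntegral.norm_integral_le_of_norm_le_const (C := B) (a := (0:ℝ)) (b := t)
      (f := gh) (fun z _ => (Real.norm_eq_abs _).le.trans (hghB z))
    simpa [Real.norm_eq_abs] using this
  -- R from liminf
  have hln : Filter.liminf μ Filter.atTop - ε / 2 < Filter.liminf μ Filter.atTop := by linarith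
  have hev := Filter.eventually_lt_of_lt_liminf hln
    (Filter.isBoundedUnder_of ⟨0, fun x => hμnonneg x⟩)
  obtain ⟨R0, hR0⟩ := Filter.eventually_atTop.1 hev
  set R : ℝ := max R0 0 with hRdef
  have hR0' : (0:ℝ) ≤ R := le_max_right _ _
  have hRε : ∀ z, R ≤ z → ε / 2 ≤ lam + μ z := by
    intro z hz
    have := hR0 z ((le_max_left _ _).trans hz)
    rw [hlam]; linarith
  have hghpos : ∀ z, R ≤ z → 0 ≤ gh z := by
    intro z hz
    have hz0 : 0 ≤ z := hR0'.trans hz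
    simp only [hgh, if_pos hz0]
    exact div_nonneg (by linarith [hRε z hz]) (le_trans hγ0.le (hγlb z hz0))
  have hghinv : ∀ s, R ≤ s → (γ s)⁻¹ ≤ (ε / 2)⁻¹ * gh s := by
    intro s hs
    have hs0 : 0 ≤ s := hR0'.trans hs
    have hγpos : 0 < γ s := lt_of_lt_of_le hγ0 (hγlb s hs0)
    have h1 : ε / 2 ≤ lam + μ s := hRε s hs
    have h2 : (ε / 2) * (γ s)⁻¹ ≤ (lam + μ s) * (γ s)⁻¹ :=
      mul_le_mul_of_nonneg_right h1 (inv_nonneg.2 hγpos.le)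
    simp only [hgh, if_pos hs0]
    calc (γ s)⁻¹ = (ε / 2)⁻¹ * ((ε / 2) * (γ s)⁻¹) := by field_simp
      _ ≤ (ε / 2)⁻¹ * ((lam + μ s) * (γ s)⁻¹) :=
        mul_le_mul_of_nonneg_left h2 (by positivity)
      _ = (ε / 2)⁻¹ * ((lam + μ s) / γ s) := by ring
  have hLB := fun (y : ℝ) (hy : (0:ℝ) < y) => lemB gh γ γ0 (ε / 2) B R hγ0 (half_pos hε)
    hBpos hR0' hghm hγc.continuousOn (fun s hs => hγlb s hs) (fun z _ => hghB z)
    hghpos hghinv y hy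
  set C : ℝ := Real.exp (B * R) * (R / γ0 + (ε / 2)⁻¹ * Real.exp 1) with hCdef
  -- the reduced function
  set P : ℝ → ℝ := fun s => ∫ y in Ioc 0 s, h y * Real.exp (Gh y) with hPdef
  set u' : ℝ → ℝ := fun s => (γ s)⁻¹ * (P s / Real.exp (Gh s)) with hu'def
  have hEq : EqOn (fun s => (γ s)⁻¹ * ∫ y in Set.Ioc 0 s,
      h y * Real.exp (-∫ z in y..s, (lam + μ z) / γ z)) u' (Set.Ioi 0) := by
    intro s hs
    simp only
    have hstep : ∫ y in Set.Ioc 0 s, h y * Real.exp (-∫ z in y..s, (lam + μ z) / γ z)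
        = ∫ y in Set.Ioc 0 s, (h y * Real.exp (Gh y)) / Real.exp (Gh s) := by
      apply setIntegral_congr_fun measurableSet_Ioc
      intro y hy
      show h y * Real.exp (-∫ z in y..s, (lam + μ z) / γ z)
          = h y * Real.exp (Gh y) / Real.exp (Gh s)
      have e1 : (∫ z in y..s, (lam + μ z) / γ z) = ∫ z in y..s, gh z := by
        apply intervalIntegral.integral_congr
        intro z hz
        rw [uIcc_of_le hy.2] at hz
        have : (0:ℝ) ≤ z := le_trans hy.1.le hz.1
        simp only [hgh, if_pos this]
      have e2 : Gh s - Gh y = ∫ z in y..s, gh z := hGhd y s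
      rw [e1, ← e2, neg_sub, Real.exp_sub]
      ring
    rw [hstep, MeasureTheory.integral_div]
  rw [integrableOn_congr_fun hEq measurableSet_Ioi]
  -- measurability parts
  set φh : ℝ → ℝ := Set.indicator (Ioi 0) (fun y => h y * Real.exp (Gh y)) with hφdef
  have hcore : ∀ b' : ℝ, IntegrableOn (fun y => h y * Real.exp (Gh y)) (Ioc 0 b') := by
    intro b'
    refine Integrable.mono' (g := fun y => Real.exp (B * |b'|) * ‖h y‖)
      (IntegrableOn.mono_set (hh.norm.const_mul (Real.exp (B * |b'|)))
        Set.Ioc_subset_Ioi_self) ?_ ?_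
    · exact ((hh.1.mono_measure (Measure.restrict_mono Set.Ioc_subset_Ioi_self le_rfl)).mul
        ((Real.continuous_exp.comp hGhc).aestronglyMeasurable.restrict))
    · filter_upwards [ae_restrict_mem measurableSet_Ioc] with y hy
      rw [norm_mul]
      have hyb : |y| ≤ |b'| := by
        rw [abs_of_pos hy.1]
        exact le_trans hy.2 (le_abs_self _)
      have h1 : ‖Real.exp (Gh y)‖ ≤ Real.exp (B * |b'|) := by
        rw [Real.norm_of_nonneg (Real.exp_pos _).le]
        apply Real.exp_le_exp.2
        have h2 := (abs_le.1 (hGhbd y)).2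
        nlinarith
      calc ‖h y‖ * ‖Real.exp (Gh y)‖ ≤ ‖h y‖ * Real.exp (B * |b'|) :=
            mul_le_mul_of_nonneg_left h1 (norm_nonneg _)
        _ = Real.exp (B * |b'|) * ‖h y‖ := mul_comm _ _
  have hφint : ∀ a b : ℝ, IntervalIntegrable φh volume a b := by
    intro a b
    rw [intervalIntegrable_iff]
    have hIO : IntegrableOn (fun y => h y * Real.exp (Gh y)) (Ioi 0 ∩ Set.uIoc a b) :=
      (hcore (max a b)).mono_set (fun z hz => ⟨hz.1, hz.2.2⟩)
    rw [hφdef]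
    show Integrable ((Ioi 0).indicator fun y => h y * Real.exp (Gh y)) (volume.restrict (Set.uIoc a b))
    rw [MeasureTheory.integrable_indicator_iff measurableSet_Ioi]
    show Integrable _ ((volume.restrict (Set.uIoc a b)).restrict (Ioi 0))
    rw [Measure.restrict_restrict measurableSet_Ioi]
    exact hIO
  have hQc : Continuous (fun s => ∫ y in (0:ℝ)..s, φh y) :=
    intervalIntegral.continuous_primitive hφint 0
  have hPQ : ∀ s : ℝ, 0 ≤ s → (∫ y in (0:ℝ)..s, φh y) = P s := by
    intro s hs
    rw [intervalIntegral.integral_of_le hs]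
    apply setIntegral_congr_fun measurableSet_Ioc
    intro y hy
    exact Set.indicator_of_mem (hy.1 : y ∈ Ioi 0) _
  have hPm : AEStronglyMeasurable P (volume.restrict (Ioi 0)) := by
    apply hQc.aestronglyMeasurable.restrict.congr
    rw [Filter.EventuallyEq, ae_restrict_iff' measurableSet_Ioi]
    exact Filter.Eventually.of_forall (fun s hs => hPQ s hs.le)
  have hexpim : Continuous (fun s => (Real.exp (Gh s))⁻¹) :=
    (Real.continuous_exp.comp hGhc).inv₀ (fun x => (Real.exp_pos _).ne')
  have hu'm : AEStronglyMeasurable u' (volume.restrict (Ioi 0)) := by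
    have he : u' = fun s => (γ s)⁻¹ * (P s * (Real.exp (Gh s))⁻¹) := by
      funext s; simp only [hu'def]; rw [div_eq_mul_inv]
    rw [he]
    exact (hγc.measurable.inv.aestronglyMeasurable.restrict).mul
      (hPm.mul hexpim.aestronglyMeasurable.restrict)
  refine ⟨hu'm, ?_⟩
  -- finiteness via Tonelli
  set ht : ℝ → ℝ := hh.1.mk h with hhtdef
  have htm : StronglyMeasurable ht := hh.1.stronglyMeasurable_mk
  have hthae : h =ᵐ[volume.restrict (Ioi 0)] ht := hh.1.ae_eq_mk
  set K : ℝ × ℝ → ℝ≥0∞ := fun q =>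
    Set.indicator {q : ℝ × ℝ | q.2 ≤ q.1}
      (fun q => ENNReal.ofReal ((γ q.1)⁻¹ * Real.exp (Gh q.2 - Gh q.1)) * (‖ht q.2‖₊ : ℝ≥0∞)) q
    with hKdef
  have hKm : Measurable K := by
    apply Measurable.indicator
    · apply Measurable.fun_mul
      · apply ENNReal.measurable_ofReal.comp
        exact ((hγc.measurable.comp measurable_fst).inv).mul
          (Real.continuous_exp.measurable.comp
            (((hGhc.comp continuous_snd).sub (hGhc.comp continuous_fst)).measurable))
      · exact measurable_coe_nnreal_ennreal.comp
          ((htm.measurable.comp measurable_snd).nnnorm)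
    · exact measurableSet_le measurable_snd measurable_fst
  have hLB' : ∀ y : ℝ, 0 < y →
      IntegrableOn (fun s => (γ s)⁻¹ * Real.exp (Gh y - Gh s)) (Ioi y) ∧
      (∫ s in Ioi y, (γ s)⁻¹ * Real.exp (Gh y - Gh s)) ≤ C := fun y hy => hLB y hy
  rw [hasFiniteIntegral_iff_norm]
  have hptw : ∀ s ∈ Ioi (0:ℝ), ENNReal.ofReal ‖u' s‖ ≤ ∫⁻ y in Ioi 0, K (s, y) := by
    intro s hs
    have hKs : ∀ y : ℝ, K (s, y) = Set.indicator (Iic s)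
        (fun y => ENNReal.ofReal ((γ s)⁻¹ * Real.exp (Gh y - Gh s)) * (‖ht y‖₊ : ℝ≥0∞)) y := by
      intro y
      simp only [hKdef]
      by_cases hy : y ≤ s
      · rw [Set.indicator_of_mem (show ((s, y) : ℝ × ℝ) ∈ {q : ℝ × ℝ | q.2 ≤ q.1} from hy),
          Set.indicator_of_mem (show y ∈ Iic s from hy)]
      · rw [Set.indicator_of_notMem (show ((s, y) : ℝ × ℝ) ∉ {q : ℝ × ℝ | q.2 ≤ q.1} from hy),
          Set.indicator_of_notMem (show y ∉ Iic s from hy)]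
    have hR1 : (∫⁻ y in Ioi 0, K (s, y)) = ∫⁻ y in Ioc 0 s,
        ENNReal.ofReal ((γ s)⁻¹ * Real.exp (Gh y - Gh s)) * (‖ht y‖₊ : ℝ≥0∞) := by
      simp_rw [hKs]
      rw [lintegral_indicator measurableSet_Iic, Measure.restrict_restrict measurableSet_Iic]
      have he : Iic s ∩ Ioi 0 = Ioc 0 s :=
        Set.ext fun x => ⟨fun hx => ⟨hx.2, hx.1⟩, fun hx => ⟨hx.2, hx.1⟩⟩
      rw [he]
    have hu's : u' s = ∫ y in Ioc 0 s, ((γ s)⁻¹ * Real.exp (Gh y - Gh s)) * h y := by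
      have he : ∀ y : ℝ, ((γ s)⁻¹ * Real.exp (Gh y - Gh s)) * h y
          = ((γ s)⁻¹ * (Real.exp (Gh s))⁻¹) * (h y * Real.exp (Gh y)) := by
        intro y; rw [Real.exp_sub, div_eq_mul_inv]; ring
      rw [show (∫ y in Ioc 0 s, ((γ s)⁻¹ * Real.exp (Gh y - Gh s)) * h y)
          = ∫ y in Ioc 0 s, ((γ s)⁻¹ * (Real.exp (Gh s))⁻¹) * (h y * Real.exp (Gh y)) from
        setIntegral_congr_fun measurableSet_Ioc (fun y _ => he y)]
      rw [MeasureTheory.integral_const_mul, hu'def]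
      simp only [hPdef]
      rw [div_eq_mul_inv]; ring
    rw [hR1, hu's, ofReal_norm]
    calc (‖∫ y in Ioc 0 s, ((γ s)⁻¹ * Real.exp (Gh y - Gh s)) * h y‖₊ : ℝ≥0∞)
        ≤ ∫⁻ y in Ioc 0 s, ‖((γ s)⁻¹ * Real.exp (Gh y - Gh s)) * h y‖₊ :=
          enorm_integral_le_lintegral_enorm _
      _ ≤ ∫⁻ y in Ioc 0 s, ENNReal.ofReal ((γ s)⁻¹ * Real.exp (Gh y - Gh s)) * (‖ht y‖₊ : ℝ≥0∞) := by
          apply lintegral_mono_ae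
          have hae' : ∀ᵐ y ∂(volume.restrict (Ioc 0 s)), h y = ht y :=
            ae_restrict_of_ae_restrict_of_subset Set.Ioc_subset_Ioi_self hthae
          filter_upwards [hae'] with y hy
          rw [nnnorm_mul, ENNReal.coe_mul, hy]
          apply mul_le_mul_left
          apply le_of_eq
          apply Real.enorm_eq_ofReal
          have hγpos : 0 < γ s := lt_of_lt_of_le hγ0 (hγlb s (show (0:ℝ) ≤ s from le_of_lt hs))
          positivity
  calc ∫⁻ s in Ioi 0, ENNReal.ofReal ‖u' s‖
      ≤ ∫⁻ s in Ioi 0, ∫⁻ y in Ioi 0, K (s, y) := by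
        apply lintegral_mono_ae
        rw [ae_restrict_iff' measurableSet_Ioi]
        exact Filter.Eventually.of_forall hptw
    _ = ∫⁻ y in Ioi 0, ∫⁻ s in Ioi 0, K (s, y) :=
        lintegral_lintegral_swap hKm.aemeasurable
    _ ≤ ∫⁻ y in Ioi 0, ENNReal.ofReal C * (‖ht y‖₊ : ℝ≥0∞) := by
        apply lintegral_mono_ae
        rw [ae_restrict_iff' measurableSet_Ioi]
        apply Filter.Eventually.of_forall
        intro y hy
        have hKy : ∀ s : ℝ, K (s, y) = Set.indicator (Ici y)
            (fun s => ENNReal.ofReal ((γ s)⁻¹ * Real.exp (Gh y - Gh s)) * (‖ht y‖₊ : ℝ≥0∞)) s := by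
          intro s
          simp only [hKdef]
          by_cases hsy : y ≤ s
          · rw [Set.indicator_of_mem (show ((s, y) : ℝ × ℝ) ∈ {q : ℝ × ℝ | q.2 ≤ q.1} from hsy),
              Set.indicator_of_mem (show s ∈ Ici y from hsy)]
          · rw [Set.indicator_of_notMem
                (show ((s, y) : ℝ × ℝ) ∉ {q : ℝ × ℝ | q.2 ≤ q.1} from hsy),
              Set.indicator_of_notMem (show s ∉ Ici y from hsy)]
        have hnn : 0 ≤ᵐ[volume.restrict (Ioi y)]
            (fun s => (γ s)⁻¹ * Real.exp (Gh y - Gh s)) := by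
          rw [Filter.EventuallyLE, ae_restrict_iff' measurableSet_Ioi]
          apply Filter.Eventually.of_forall
          intro s hs
          have hγpos : 0 < γ s := lt_of_lt_of_le hγ0 (hγlb s (show (0:ℝ) ≤ s from le_of_lt (lt_trans (show (0:ℝ) < y from hy) hs)))
          positivity
        calc ∫⁻ s in Ioi 0, K (s, y)
            = ∫⁻ s in Ioi y, ENNReal.ofReal ((γ s)⁻¹ * Real.exp (Gh y - Gh s)) *
              (‖ht y‖₊ : ℝ≥0∞) := by
              simp_rw [hKy]
              rw [lintegral_indicator measurableSet_Ici,
                Measure.restrict_restrict measurableSet_Ici]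
              have he : Ici y ∩ Ioi 0 = Ici y :=
                Set.inter_eq_left.2 (fun x hx => show (0:ℝ) < x from lt_of_lt_of_le (show (0:ℝ) < y from hy) hx)
              rw [he, ← Measure.restrict_congr_set Ioi_ae_eq_Ici]
          _ = (∫⁻ s in Ioi y, ENNReal.ofReal ((γ s)⁻¹ * Real.exp (Gh y - Gh s))) *
              (‖ht y‖₊ : ℝ≥0∞) := lintegral_mul_const' _ _ ENNReal.coe_ne_top
          _ ≤ ENNReal.ofReal C * (‖ht y‖₊ : ℝ≥0∞) := by
              apply mul_le_mul_left
              calc ∫⁻ s in Ioi y, ENNReal.ofReal ((γ s)⁻¹ * Real.exp (Gh y - Gh s))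
                  = ENNReal.ofReal (∫ s in Ioi y, (γ s)⁻¹ * Real.exp (Gh y - Gh s)) :=
                    (MeasureTheory.ofReal_integral_eq_lintegral_ofReal (hLB' y hy).1 hnn).symm
                _ ≤ ENNReal.ofReal C := ENNReal.ofReal_le_ofReal (hLB' y hy).2
    _ = ENNReal.ofReal C * ∫⁻ y in Ioi 0, (‖ht y‖₊ : ℝ≥0∞) :=
        lintegral_const_mul' _ _ ENNReal.ofReal_ne_top
    _ < ⊤ := by
        apply ENNReal.mul_lt_top ENNReal.ofReal_lt_top
        have he : (∫⁻ y in Ioi 0, (‖ht y‖₊ : ℝ≥0∞)) = ∫⁻ y in Ioi 0, (‖h y‖₊ : ℝ≥0∞) :=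
          lintegral_congr_ae (hthae.mono (fun y hy => by simp only [hy]))
        rw [he]
        exact hh.2
end

section
/- Let $\mu \in L^\infty(0,\infty)$ nonnegative with $\limsup_{x\to\infty}\mu(x) =: L$, let $\gamma \in W^{1,\infty}(0,\infty)$ with $0 < \gamma_0 \leq \gamma \leq \|\gamma\|_\infty$, $\varepsilon > 0$, and $\lambda := -L - \varepsilon$. Then there exists a nonzero nonnegative $h \in L^1(0,\infty)$ such that the function $u(s) = \frac{1}{\gamma(s)}\int_0^s h(y)\exp\left(-\int_y^s \frac{\lambda + \mu(z)}{\gamma(z)}\,dz\right)dy$ satisfies $\int_0^\infty u(s)\,ds = \infty$. -/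
open MeasureTheory

/-- For `λ = -limsup_{x→∞} μ(x) - ε` with `ε > 0`, there is a nonzero nonnegative
`h ∈ L¹(0,∞)` for which
`u(s) = (1/γ(s)) ∫_0^s h(y) exp(-∫_y^s (λ+μ(z))/γ(z) dz) dy` has infinite integral. -/
theorem stmt12 (γ0 Γ ε : ℝ) (hγ0 : 0 < γ0) (hε : 0 < ε) (γ μ : ℝ → ℝ)
    (hγlip : ∃ L : NNReal, LipschitzWith L γ)
    (hγlb : ∀ s ∈ Set.Ici (0 : ℝ), γ0 ≤ γ s)
    (hγub : ∀ s ∈ Set.Ici (0 : ℝ), γ s ≤ Γ)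
    (hμmeas : Measurable μ) (hμnonneg : ∀ x, 0 ≤ μ x)
    (hμbdd : ∃ M : ℝ, ∀ x, μ x ≤ M) :
    ∃ h : ℝ → ℝ, IntegrableOn h (Set.Ioi 0) ∧ (∀ x, 0 ≤ h x) ∧
      (0 < ∫ x in Set.Ioi 0, h x) ∧
      ∫⁻ s in Set.Ioi 0,
        ENNReal.ofReal ((γ s)⁻¹ * ∫ y in Set.Ioc 0 s,
          h y * Real.exp (-∫ z in y..s,
            ((-(Filter.limsup μ Filter.atTop) - ε) + μ z) / γ z)) = ⊤ := by
  obtain ⟨M, hM⟩ := hμbdd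
  obtain ⟨K, hK⟩ := hγlip
  have hγcont : Continuous γ := hK.continuous
  set L : ℝ := Filter.limsup μ Filter.atTop with hL
  set lam : ℝ := -L - ε with hlam
  set g : ℝ → ℝ := fun z => (lam + μ z) / γ z with hg
  have hgmeas : Measurable g := (measurable_const.add hμmeas).div hγcont.measurable
  have hΓpos : 0 < Γ := lt_of_lt_of_le hγ0 ((hγlb 0 Set.self_mem_Ici).trans (hγub 0 Set.self_mem_Ici))
  -- find R ≥ 0 with μ z < L + ε/2 for z ≥ R
  have hbdd : Filter.IsBoundedUnder (· ≤ ·) Filter.atTop μ :=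
    Filter.isBoundedUnder_of ⟨M, fun x => hM x⟩
  have hev : ∀ᶠ z in Filter.atTop, μ z < L + ε / 2 := by
    apply Filter.eventually_lt_of_limsup_lt _ hbdd
    simpa [hL] using by linarith
  obtain ⟨R0, hR0⟩ := Filter.eventually_atTop.1 hev
  set R : ℝ := max R0 0 with hR
  have hRnn : (0 : ℝ) ≤ R := le_max_right _ _
  have hμR : ∀ z, R ≤ z → μ z < L + ε / 2 := fun z hz =>
    hR0 z (le_trans (le_max_left _ _) hz)
  -- the function h
  refine ⟨Set.indicator (Set.Ioc R (R + 1)) (fun _ => (1 : ℝ)), ?_, ?_, ?_, ?_⟩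
  · exact ((integrable_indicator_iff measurableSet_Ioc).2
      (integrableOn_const measure_Ioc_lt_top.ne)).integrableOn
  · exact fun x => Set.indicator_nonneg (fun _ _ => zero_le_one) x
  · rw [setIntegral_indicator measurableSet_Ioc]
    have hsub : Set.Ioi (0:ℝ) ∩ Set.Ioc R (R+1) = Set.Ioc R (R+1) := by
      apply Set.inter_eq_right.2
      intro x hx
      exact lt_of_le_of_lt hRnn hx.1
    rw [hsub]
    simp [Real.volume_Ioc]
  -- main estimate
  have key : ∀ s : ℝ, R + 1 ≤ s →
      Γ⁻¹ ≤ (γ s)⁻¹ * ∫ y in Set.Ioc 0 s,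
        (Set.indicator (Set.Ioc R (R+1)) (fun _ => (1:ℝ)) y) *
          Real.exp (-∫ z in y..s, (lam + μ z) / γ z) := by
    intro s hs
    have hs0 : (0:ℝ) ≤ s := le_trans (by linarith) hs
    set E : ℝ → ℝ := fun y => Real.exp (-∫ z in y..s, g z) with hE
    -- integrability of g on Icc 0 s
    have hgbdd : ∀ z ∈ Set.Icc (0:ℝ) s, ‖g z‖ ≤ (|lam| + M) / γ0 := by
      intro z hz
      have hγz : γ0 ≤ γ z := hγlb z hz.1
      have h1 : |lam + μ z| ≤ |lam| + M := by
        have := hμnonneg z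
        have := hM z
        rw [abs_le]
        constructor <;> cases abs_cases lam <;> linarith
      rw [hg]
      simp only [Real.norm_eq_abs, abs_div]
      rw [abs_of_pos (lt_of_lt_of_le hγ0 hγz)]
      exact div_le_div₀ (add_nonneg (abs_nonneg _) (le_trans (hμnonneg 0) (hM 0))) h1 hγ0 hγz
    have hgint : IntegrableOn g (Set.Icc 0 s) := by
      apply Measure.integrableOn_of_bounded (M := (|lam| + M) / γ0)
        (by simp) hgmeas.aestronglyMeasurable
      exact (ae_restrict_iff' measurableSet_Icc).2 (Filter.Eventually.of_forall hgbdd)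
    -- continuity of the primitive
    have hcont0 : ContinuousOn (fun y => ∫ t in Set.Ioc (0:ℝ) y, g t) (Set.Icc 0 s) :=
      intervalIntegral.continuousOn_primitive hgint
    have hEcont : ContinuousOn E (Set.Icc 0 s) := by
      have h2 : ContinuousOn (fun y => ∫ z in y..s, g z) (Set.Icc 0 s) := by
        have : ContinuousOn (fun y => (∫ z in (0:ℝ)..s, g z)
            - ∫ t in Set.Ioc (0:ℝ) y, g t) (Set.Icc 0 s) :=
          (continuousOn_const.sub hcont0)
        apply this.congr
        intro y hy
        have hi1 : IntervalIntegrable g volume 0 y := by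
          rw [intervalIntegrable_iff_integrableOn_Ioc_of_le hy.1]
          exact hgint.mono_set (Set.Ioc_subset_Icc_self.trans (Set.Icc_subset_Icc_right hy.2))
        have hi2 : IntervalIntegrable g volume y s := by
          rw [intervalIntegrable_iff_integrableOn_Ioc_of_le hy.2]
          exact hgint.mono_set (Set.Ioc_subset_Icc_self.trans (Set.Icc_subset_Icc_left hy.1))
        have := intervalIntegral.integral_add_adjacent_intervals hi1 hi2
        show (∫ z in y..s, g z)
            = (∫ z in (0:ℝ)..s, g z) - ∫ t in Set.Ioc (0:ℝ) y, g t
        rw [← intervalIntegral.integral_of_le hy.1]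
        linarith
      exact Real.continuous_exp.comp_continuousOn h2.neg
    have hsubIcc : Set.Ioc R (R+1) ⊆ Set.Icc 0 s :=
      Set.Ioc_subset_Icc_self.trans (Set.Icc_subset_Icc hRnn hs)
    have hEint : IntegrableOn E (Set.Ioc R (R+1)) :=
      (hEcont.integrableOn_Icc).mono_set hsubIcc
    -- lower bound E ≥ 1 on Ioc R (R+1)
    have hE1 : ∀ y ∈ Set.Ioc R (R+1), (1:ℝ) ≤ E y := by
      intro y hy
      have hys : y ≤ s := hy.2.trans hs
      have hnp : ∫ z in y..s, g z ≤ 0 := by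
        rw [← neg_nonneg, ← intervalIntegral.integral_neg]
        apply intervalIntegral.integral_nonneg hys
        intro z hz
        have hzR : R ≤ z := le_of_lt (lt_of_lt_of_le hy.1 hz.1)
        have hz0 : (0:ℝ) ≤ z := le_trans hRnn hzR
        have hμz := hμR z hzR
        have hγz : γ0 ≤ γ z := hγlb z hz0
        have hnum : lam + μ z ≤ 0 := by rw [hlam]; linarith
        have : g z ≤ 0 := div_nonpos_iff.2 (Or.inr ⟨hnum, by linarith⟩)
        linarith
      rw [hE]
      calc (1:ℝ) = Real.exp 0 := (Real.exp_zero).symm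
        _ ≤ _ := Real.exp_le_exp.2 (by linarith)
    -- reduce the integral
    have hsubIoc : Set.Ioc R (R+1) ⊆ Set.Ioc 0 s :=
      Set.Ioc_subset_Ioc hRnn hs
    have hrw : ∫ y in Set.Ioc 0 s,
        (Set.indicator (Set.Ioc R (R+1)) (fun _ => (1:ℝ)) y) * E y
        = ∫ y in Set.Ioc R (R+1), E y := by
      have : ∀ y, (Set.indicator (Set.Ioc R (R+1)) (fun _ => (1:ℝ)) y) * E y
          = Set.indicator (Set.Ioc R (R+1)) E y := by
        intro y
        by_cases hy : y ∈ Set.Ioc R (R+1) <;> simp [Set.indicator, hy]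
      simp_rw [this]
      rw [setIntegral_indicator measurableSet_Ioc, Set.inter_eq_right.2 hsubIoc]
    have hge1 : (1:ℝ) ≤ ∫ y in Set.Ioc R (R+1), E y := by
      have h1 : ∫ y in Set.Ioc R (R+1), (1:ℝ) = 1 := by
        simp [Real.volume_Ioc]
      calc (1:ℝ) = ∫ _ in Set.Ioc R (R+1), (1:ℝ) := h1.symm
        _ ≤ _ := setIntegral_mono_on (integrableOn_const measure_Ioc_lt_top.ne)
            hEint measurableSet_Ioc hE1
    have hγs : γ0 ≤ γ s := hγlb s hs0
    have hγsΓ : γ s ≤ Γ := hγub s hs0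
    have hγspos : 0 < γ s := lt_of_lt_of_le hγ0 hγs
    calc Γ⁻¹ = Γ⁻¹ * 1 := (mul_one _).symm
      _ ≤ (γ s)⁻¹ * ∫ y in Set.Ioc R (R+1), E y := by
          apply mul_le_mul (inv_anti₀ hγspos hγsΓ) hge1 zero_le_one
          positivity
      _ = _ := by rw [← hrw]
  -- conclude
  rw [eq_top_iff]
  calc (⊤ : ENNReal) = ∫⁻ _ in Set.Ioi (R+1), ENNReal.ofReal Γ⁻¹ := by
        rw [setLIntegral_const, Real.volume_Ioi, ENNReal.mul_top]
        simp [ENNReal.ofReal_eq_zero, not_le, inv_pos, hΓpos]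
    _ ≤ ∫⁻ s in Set.Ioi (R+1),
        ENNReal.ofReal ((γ s)⁻¹ * ∫ y in Set.Ioc 0 s,
          (Set.indicator (Set.Ioc R (R+1)) (fun _ => (1:ℝ)) y) *
            Real.exp (-∫ z in y..s, ((-(Filter.limsup μ Filter.atTop)) - ε + μ z) / γ z)) := by
        apply setLIntegral_mono' measurableSet_Ioi
        intro s hs
        exact ENNReal.ofReal_le_ofReal (key s (le_of_lt hs))
    _ ≤ _ := lintegral_mono_set (Set.Ioi_subset_Ioi (by linarith))
end

section
/- Let $\gamma_1, \gamma_2 \in W^{1,\infty}(0,\infty)$ with $\gamma_i \geq \gamma_0 > 0$, let $\mu, c_1, c_2 \in L^\infty(0,\infty)$ be nonnegative, and suppose $u_1, u_2 \in W^{1,1}(0,\infty)$ are nonnegative, $u_1(0)=u_2(0)=0$, and satisfy for $\lambda > 0$ and nonnegative $h_1, h_2 \in L^1(0,\infty)$: $(\gamma_1 u_1)' + (\lambda + c_1 + \mu)u_1 - c_2 u_2 = h_1$ and $(\gamma_2 u_2)' + (\lambda + c_2)u_2 - c_1 u_1 = h_2$. Then $\lambda \int_0^\infty (u_1 + u_2)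 \leq \int_0^\infty (h_1 + h_2)$. -/
open MeasureTheory

/-- For the coupled system `(γ₁u₁)' + (λ+c₁+μ)u₁ - c₂u₂ = h₁`,
`(γ₂u₂)' + (λ+c₂)u₂ - c₁u₁ = h₂` on `(0,∞)` with `u₁(0)=u₂(0)=0` (encoded in
integrated form), nonnegative data and `λ > 0`, one has
`λ ∫₀^∞ (u₁+u₂) ≤ ∫₀^∞ (h₁+h₂)`. -/
theorem stmt16 (γ0 lam : ℝ) (hγ0 : 0 < γ0) (hlam : 0 < lam)
    (γ1 γ2 μ c1 c2 u1 u2 h1 h2 : ℝ → ℝ)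
    (hγ1lip : ∃ L : NNReal, LipschitzWith L γ1)
    (hγ2lip : ∃ L : NNReal, LipschitzWith L γ2)
    (hγ1lb : ∀ s ∈ Set.Ici (0 : ℝ), γ0 ≤ γ1 s)
    (hγ2lb : ∀ s ∈ Set.Ici (0 : ℝ), γ0 ≤ γ2 s)
    (hμmeas : Measurable μ) (hμnonneg : ∀ x, 0 ≤ μ x) (hμbdd : ∃ M, ∀ x, μ x ≤ M)
    (hc1meas : Measurable c1) (hc1nonneg : ∀ x, 0 ≤ c1 x) (hc1bdd : ∃ M, ∀ x, c1 x ≤ M)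
    (hc2meas : Measurable c2) (hc2nonneg : ∀ x, 0 ≤ c2 x) (hc2bdd : ∃ M, ∀ x, c2 x ≤ M)
    (hu1cont : ContinuousOn u1 (Set.Ici 0)) (hu2cont : ContinuousOn u2 (Set.Ici 0))
    (hu1nonneg : ∀ s, 0 ≤ u1 s) (hu2nonneg : ∀ s, 0 ≤ u2 s)
    (hh1 : IntegrableOn h1 (Set.Ioi 0)) (hh2 : IntegrableOn h2 (Set.Ioi 0))
    (hh1nonneg : ∀ s, 0 ≤ h1 s) (hh2nonneg : ∀ s, 0 ≤ h2 s)
    (heq1 : ∀ s ∈ Set.Ici (0 : ℝ), γ1 s * u1 s =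
      ∫ y in Set.Ioc 0 s, (h1 y - (lam + c1 y + μ y) * u1 y + c2 y * u2 y))
    (heq2 : ∀ s ∈ Set.Ici (0 : ℝ), γ2 s * u2 s =
      ∫ y in Set.Ioc 0 s, (h2 y - (lam + c2 y) * u2 y + c1 y * u1 y)) :
    ENNReal.ofReal lam * ∫⁻ s in Set.Ioi 0, ENNReal.ofReal (u1 s + u2 s)
      ≤ ENNReal.ofReal (∫ s in Set.Ioi 0, (h1 s + h2 s)) := by
  obtain ⟨M1, hM1⟩ := hc1bdd
  obtain ⟨M2, hM2⟩ := hc2bdd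
  obtain ⟨Mμ, hMμ⟩ := hμbdd
  set C := ∫ s in Set.Ioi 0, (h1 s + h2 s) with hC
  -- integrability of u1, u2 on Ioc 0 t
  have hIcc : ∀ t : ℝ, Set.Icc (0:ℝ) t ⊆ Set.Ici 0 := fun t x hx => hx.1
  have hu1int : ∀ t : ℝ, IntegrableOn u1 (Set.Ioc 0 t) := fun t =>
    ((hu1cont.mono (hIcc t)).integrableOn_compact isCompact_Icc).mono_set
      Set.Ioc_subset_Icc_self
  have hu2int : ∀ t : ℝ, IntegrableOn u2 (Set.Ioc 0 t) := fun t =>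
    ((hu2cont.mono (hIcc t)).integrableOn_compact isCompact_Icc).mono_set
      Set.Ioc_subset_Icc_self
  have hmulint : ∀ (c : ℝ → ℝ) (M : ℝ), Measurable c → (∀ x, 0 ≤ c x) → (∀ x, c x ≤ M) →
      ∀ (u : ℝ → ℝ), (∀ x, 0 ≤ u x) → (∀ t : ℝ, IntegrableOn u (Set.Ioc 0 t)) →
      ∀ t : ℝ, IntegrableOn (fun y => c y * u y) (Set.Ioc 0 t) := by
    intro c M hcm hc0 hcM u hu0 huint t
    refine Integrable.mono ((huint t).const_mul M) ?_ ?_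
    · exact (hcm.aemeasurable.aestronglyMeasurable.restrict).mul (huint t).1
    · refine Filter.Eventually.of_forall fun y => ?_
      rw [Real.norm_eq_abs, Real.norm_eq_abs, abs_of_nonneg (mul_nonneg (hc0 y) (hu0 y)),
        abs_of_nonneg (mul_nonneg (le_trans (hc0 0) (hcM 0)) (hu0 y))]
      exact mul_le_mul_of_nonneg_right (hcM y) (hu0 y)
  have hc1u1 := hmulint c1 M1 hc1meas hc1nonneg hM1 u1 hu1nonneg hu1int
  have hc2u2 := hmulint c2 M2 hc2meas hc2nonneg hM2 u2 hu2nonneg hu2int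
  have hμu1 := hmulint μ Mμ hμmeas hμnonneg hMμ u1 hu1nonneg hu1int
  have hC0 : 0 ≤ C :=
    setIntegral_nonneg measurableSet_Ioi fun x _ => add_nonneg (hh1nonneg x) (hh2nonneg x)
  -- key truncated bound
  have key : ∀ t : ℝ, 0 ≤ t → lam * ∫ y in Set.Ioc 0 t, (u1 y + u2 y) ≤ C := by
    intro t ht
    have Ih1 : IntegrableOn h1 (Set.Ioc 0 t) := hh1.mono_set Set.Ioc_subset_Ioi_self
    have Ih2 : IntegrableOn h2 (Set.Ioc 0 t) := hh2.mono_set Set.Ioc_subset_Ioi_self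
    have Iu1 := hu1int t
    have Iu2 := hu2int t
    have IA : IntegrableOn (fun y => h1 y - (lam + c1 y + μ y) * u1 y + c2 y * u2 y)
        (Set.Ioc 0 t) := by
      have : IntegrableOn
          (fun y => h1 y - (lam * u1 y + c1 y * u1 y + μ y * u1 y) + c2 y * u2 y)
          (Set.Ioc 0 t) :=
        (Ih1.sub (((Iu1.const_mul lam).add (hc1u1 t)).add (hμu1 t))).add (hc2u2 t)
      exact this.congr (Filter.Eventually.of_forall fun y => by ring)
    have IB : IntegrableOn (fun y => h2 y - (lam + c2 y) * u2 y + c1 y * u1 y)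
        (Set.Ioc 0 t) := by
      have : IntegrableOn (fun y => h2 y - (lam * u2 y + c2 y * u2 y) + c1 y * u1 y)
          (Set.Ioc 0 t) :=
        (Ih2.sub ((Iu2.const_mul lam).add (hc2u2 t))).add (hc1u1 t)
      exact this.congr (Filter.Eventually.of_forall fun y => by ring)
    have esum : γ1 t * u1 t + γ2 t * u2 t
        = ∫ y in Set.Ioc 0 t, ((h1 y + h2 y) - lam * (u1 y + u2 y) - μ y * u1 y) := by
      rw [heq1 t ht, heq2 t ht, ← integral_add IA IB]
      exact integral_congr_ae (Filter.Eventually.of_forall fun y => by ring)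
    have esplit : ∫ y in Set.Ioc 0 t, ((h1 y + h2 y) - lam * (u1 y + u2 y) - μ y * u1 y)
        = (∫ y in Set.Ioc 0 t, (h1 y + h2 y))
          - lam * (∫ y in Set.Ioc 0 t, (u1 y + u2 y))
          - ∫ y in Set.Ioc 0 t, μ y * u1 y := by
      have e3 : ∫ y in Set.Ioc 0 t, ((h1 y + h2 y) - lam * (u1 y + u2 y) - μ y * u1 y)
          = (∫ y in Set.Ioc 0 t, ((h1 y + h2 y) - lam * (u1 y + u2 y)))
            - ∫ y in Set.Ioc 0 t, μ y * u1 y :=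
        integral_sub ((Ih1.add Ih2).sub ((Iu1.add Iu2).const_mul lam)) (hμu1 t)
      have e4 : ∫ y in Set.Ioc 0 t, ((h1 y + h2 y) - lam * (u1 y + u2 y))
          = (∫ y in Set.Ioc 0 t, (h1 y + h2 y))
            - ∫ y in Set.Ioc 0 t, lam * (u1 y + u2 y) :=
        integral_sub (Ih1.add Ih2) ((Iu1.add Iu2).const_mul lam)
      have e5 : ∫ y in Set.Ioc 0 t, lam * (u1 y + u2 y)
          = lam * ∫ y in Set.Ioc 0 t, (u1 y + u2 y) := integral_const_mul lam _
      rw [e3, e4, e5]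
    have hμ0 : 0 ≤ ∫ y in Set.Ioc 0 t, μ y * u1 y :=
      setIntegral_nonneg measurableSet_Ioc fun y _ => mul_nonneg (hμnonneg y) (hu1nonneg y)
    have hγu : 0 ≤ γ1 t * u1 t + γ2 t * u2 t :=
      add_nonneg (mul_nonneg (le_trans hγ0.le (hγ1lb t ht)) (hu1nonneg t))
        (mul_nonneg (le_trans hγ0.le (hγ2lb t ht)) (hu2nonneg t))
    have hhC : ∫ y in Set.Ioc 0 t, (h1 y + h2 y) ≤ C := by
      refine setIntegral_mono_set (hh1.add hh2) ?_ ?_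
      · exact Filter.Eventually.of_forall fun y => add_nonneg (hh1nonneg y) (hh2nonneg y)
      · exact HasSubset.Subset.eventuallyLE Set.Ioc_subset_Ioi_self
    rw [esplit] at esum
    linarith
  -- pass to the limit
  have hUnion : Set.Ioi (0:ℝ) = ⋃ n : ℕ, Set.Ioc 0 (n:ℝ) := by
    ext x
    simp only [Set.mem_Ioi, Set.mem_iUnion, Set.mem_Ioc]
    constructor
    · intro hx
      obtain ⟨n, hn⟩ := exists_nat_ge x
      exact ⟨n, hx, hn⟩
    · rintro ⟨n, hx, -⟩; exact hx
  have hdir : Directed (· ⊆ ·) (fun n : ℕ => Set.Ioc (0:ℝ) (n:ℝ)) := by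
    refine Monotone.directed_le fun a b hab => Set.Ioc_subset_Ioc_right ?_
    exact_mod_cast hab
  have hsup : (∫⁻ s in Set.Ioi 0, ENNReal.ofReal (u1 s + u2 s))
      = ⨆ n : ℕ, ∫⁻ s in Set.Ioc 0 (n:ℝ), ENNReal.ofReal (u1 s + u2 s) := by
    rw [hUnion]
    exact setLIntegral_iUnion_of_directed _ hdir
  rw [hsup, ENNReal.mul_iSup]
  refine iSup_le fun n => ?_
  have hint : IntegrableOn (fun s => u1 s + u2 s) (Set.Ioc 0 (n:ℝ)) :=
    (hu1int n).add (hu2int n)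
  have heq : (∫⁻ s in Set.Ioc 0 (n:ℝ), ENNReal.ofReal (u1 s + u2 s))
      = ENNReal.ofReal (∫ s in Set.Ioc 0 (n:ℝ), (u1 s + u2 s)) :=
    (ofReal_integral_eq_lintegral_ofReal hint
      (Filter.Eventually.of_forall fun s => add_nonneg (hu1nonneg s) (hu2nonneg s))).symm
  rw [heq, ← ENNReal.ofReal_mul hlam.le]
  exact ENNReal.ofReal_le_ofReal (key n (Nat.cast_nonneg n))
end

section
/- Under the same coupled system with $\lambda = 0$: $(\gamma_1 u_1)' + (c_1+\mu)u_1 - c_2 u_2 = h_1$, $(\gamma_2 u_2)' + c_2 u_2 - c_1 u_1 = h_2$, with $u_1, u_2 \geq 0$, $u_1(0)=u_2(0)=0$, one has $\int_0^\infty \mu(s) u_1(s)\,ds \leq \|h_1\|_{L^1} + \|h_2\|_{L^1}$. If moreover $\liminf_{x\to\infty}\mu(x) > 0$, then $u_1 \in L^1(0,\infty)$. -/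
open MeasureTheory

/-- For the coupled system at `λ = 0`: `(γ₁u₁)' + (c₁+μ)u₁ - c₂u₂ = h₁`,
`(γ₂u₂)' + c₂u₂ - c₁u₁ = h₂` with `u₁,u₂ ≥ 0`, `u₁(0)=u₂(0)=0` (integrated form),
one has `∫₀^∞ μ u₁ ≤ ‖h₁‖_{L¹} + ‖h₂‖_{L¹}`; if moreover `liminf_{x→∞} μ(x) > 0`
then `u₁ ∈ L¹(0,∞)`. -/
theorem stmt17 (γ0 : ℝ) (hγ0 : 0 < γ0)
    (γ1 γ2 μ c1 c2 u1 u2 h1 h2 : ℝ → ℝ)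
    (hγ1lip : ∃ L : NNReal, LipschitzWith L γ1)
    (hγ2lip : ∃ L : NNReal, LipschitzWith L γ2)
    (hγ1lb : ∀ s ∈ Set.Ici (0 : ℝ), γ0 ≤ γ1 s)
    (hγ2lb : ∀ s ∈ Set.Ici (0 : ℝ), γ0 ≤ γ2 s)
    (hμmeas : Measurable μ) (hμnonneg : ∀ x, 0 ≤ μ x) (hμbdd : ∃ M, ∀ x, μ x ≤ M)
    (hc1meas : Measurable c1) (hc1nonneg : ∀ x, 0 ≤ c1 x) (hc1bdd : ∃ M, ∀ x, c1 x ≤ M)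
    (hc2meas : Measurable c2) (hc2nonneg : ∀ x, 0 ≤ c2 x) (hc2bdd : ∃ M, ∀ x, c2 x ≤ M)
    (hu1cont : ContinuousOn u1 (Set.Ici 0)) (hu2cont : ContinuousOn u2 (Set.Ici 0))
    (hu1nonneg : ∀ s, 0 ≤ u1 s) (hu2nonneg : ∀ s, 0 ≤ u2 s)
    (hh1 : IntegrableOn h1 (Set.Ioi 0)) (hh2 : IntegrableOn h2 (Set.Ioi 0))
    (hh1nonneg : ∀ s, 0 ≤ h1 s) (hh2nonneg : ∀ s, 0 ≤ h2 s)
    (heq1 : ∀ s ∈ Set.Ici (0 : ℝ), γ1 s * u1 s =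
      ∫ y in Set.Ioc 0 s, (h1 y - (c1 y + μ y) * u1 y + c2 y * u2 y))
    (heq2 : ∀ s ∈ Set.Ici (0 : ℝ), γ2 s * u2 s =
      ∫ y in Set.Ioc 0 s, (h2 y - c2 y * u2 y + c1 y * u1 y)) :
    (∫⁻ s in Set.Ioi 0, ENNReal.ofReal (μ s * u1 s)
      ≤ ENNReal.ofReal ((∫ s in Set.Ioi 0, |h1 s|) + ∫ s in Set.Ioi 0, |h2 s|)) ∧
    (0 < Filter.liminf μ Filter.atTop → IntegrableOn u1 (Set.Ioi 0)) := by
  obtain ⟨Mμ, hMμ⟩ := hμbdd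
  obtain ⟨M1, hM1⟩ := hc1bdd
  obtain ⟨M2, hM2⟩ := hc2bdd
  set C : ℝ := (∫ s in Set.Ioi 0, |h1 s|) + ∫ s in Set.Ioi 0, |h2 s| with hCdef
  -- basic integrability on bounded intervals
  have hu1int : ∀ s : ℝ, IntegrableOn u1 (Set.Ioc 0 s) := fun s =>
    ((hu1cont.mono Set.Icc_subset_Ici_self).integrableOn_Icc).mono_set Set.Ioc_subset_Icc_self
  have hu2int : ∀ s : ℝ, IntegrableOn u2 (Set.Ioc 0 s) := fun s =>
    ((hu2cont.mono Set.Icc_subset_Ici_self).integrableOn_Icc).mono_set Set.Ioc_subset_Icc_self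
  have hbd : ∀ (c : ℝ → ℝ), Measurable c → (∀ x, 0 ≤ c x) → (∃ M, ∀ x, c x ≤ M) →
      ∀ (v : ℝ → ℝ) (s : ℝ), IntegrableOn v (Set.Ioc 0 s) →
      IntegrableOn (fun y => c y * v y) (Set.Ioc 0 s) := by
    intro c hcm hcn hcb v s hv
    obtain ⟨M, hM⟩ := hcb
    exact hv.bdd_mul hcm.aestronglyMeasurable
      (c := M) (Filter.Eventually.of_forall fun x => by rw [Real.norm_eq_abs, abs_of_nonneg (hcn x)]; exact hM x)
  have hμu1int : ∀ s : ℝ, IntegrableOn (fun y => μ y * u1 y) (Set.Ioc 0 s) := fun s =>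
    hbd μ hμmeas hμnonneg ⟨Mμ, hMμ⟩ u1 s (hu1int s)
  have hc1u1int : ∀ s : ℝ, IntegrableOn (fun y => c1 y * u1 y) (Set.Ioc 0 s) := fun s =>
    hbd c1 hc1meas hc1nonneg ⟨M1, hM1⟩ u1 s (hu1int s)
  have hc2u2int : ∀ s : ℝ, IntegrableOn (fun y => c2 y * u2 y) (Set.Ioc 0 s) := fun s =>
    hbd c2 hc2meas hc2nonneg ⟨M2, hM2⟩ u2 s (hu2int s)
  -- the key uniform bound
  have key : ∀ s : ℝ, 0 ≤ s → ∫ y in Set.Ioc 0 s, μ y * u1 y ≤ C := by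
    intro s hs
    have hh1' : IntegrableOn h1 (Set.Ioc 0 s) := hh1.mono_set Set.Ioc_subset_Ioi_self
    have hh2' : IntegrableOn h2 (Set.Ioc 0 s) := hh2.mono_set Set.Ioc_subset_Ioi_self
    have hf : IntegrableOn (fun y => h1 y - (c1 y + μ y) * u1 y + c2 y * u2 y)
        (Set.Ioc 0 s) := by
      have heq : (fun y => h1 y - (c1 y + μ y) * u1 y + c2 y * u2 y)
          = fun y => (h1 y - (c1 y * u1 y + μ y * u1 y)) + c2 y * u2 y := by
        funext y; ring
      rw [heq]
      exact (hh1'.sub ((hc1u1int s).add (hμu1int s))).add (hc2u2int s)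
    have hg : IntegrableOn (fun y => h2 y - c2 y * u2 y + c1 y * u1 y) (Set.Ioc 0 s) :=
      (hh2'.sub (hc2u2int s)).add (hc1u1int s)
    have hsum : γ1 s * u1 s + γ2 s * u2 s
        = ∫ y in Set.Ioc 0 s, ((h1 y + h2 y) - μ y * u1 y) := by
      rw [heq1 s hs, heq2 s hs, ← integral_add hf hg]
      congr 1; funext y; ring
    have hsumint : IntegrableOn (fun y => h1 y + h2 y) (Set.Ioc 0 s) := hh1'.add hh2'
    have hsub' : (∫ y in Set.Ioc 0 s, (h1 y + h2 y - μ y * u1 y))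
        = (∫ y in Set.Ioc 0 s, (h1 y + h2 y)) - ∫ y in Set.Ioc 0 s, μ y * u1 y :=
      integral_sub hsumint (hμu1int s)
    have hsub : γ1 s * u1 s + γ2 s * u2 s
        = (∫ y in Set.Ioc 0 s, (h1 y + h2 y)) - ∫ y in Set.Ioc 0 s, μ y * u1 y := by
      rw [hsum, hsub']
    have hpos : 0 ≤ γ1 s * u1 s + γ2 s * u2 s :=
      add_nonneg (mul_nonneg (hγ0.le.trans (hγ1lb s hs)) (hu1nonneg s))
        (mul_nonneg (hγ0.le.trans (hγ2lb s hs)) (hu2nonneg s))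
    have hle1 : ∫ y in Set.Ioc 0 s, μ y * u1 y ≤ ∫ y in Set.Ioc 0 s, (h1 y + h2 y) := by
      nlinarith [hsub ▸ hpos]
    have hle2 : (∫ y in Set.Ioc 0 s, (h1 y + h2 y)) ≤ ∫ y in Set.Ioi 0, (h1 y + h2 y) :=
      setIntegral_mono_set (hh1.add hh2)
        (Filter.Eventually.of_forall fun y => add_nonneg (hh1nonneg y) (hh2nonneg y))
        (HasSubset.Subset.eventuallyLE Set.Ioc_subset_Ioi_self)
    have heqC : (∫ y in Set.Ioi 0, (h1 y + h2 y)) = C := by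
      rw [hCdef, integral_add hh1 hh2]
      congr 1
      · exact integral_congr_ae (Filter.Eventually.of_forall fun y =>
          (abs_of_nonneg (hh1nonneg y)).symm)
      · exact integral_congr_ae (Filter.Eventually.of_forall fun y =>
          (abs_of_nonneg (hh2nonneg y)).symm)
    linarith
  -- part 1: lintegral bound via monotone convergence
  have hu1ae : AEMeasurable u1 (volume.restrict (Set.Ioi (0:ℝ))) :=
    (hu1cont.aemeasurable measurableSet_Ici).mono_measure
      (Measure.restrict_mono Set.Ioi_subset_Ici_self le_rfl)
  have hgmeas : AEMeasurable (fun x => ENNReal.ofReal (μ x * u1 x))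
      (volume.restrict (Set.Ioi (0:ℝ))) := (hμmeas.aemeasurable.mul hu1ae).ennreal_ofReal
  have part1 : ∫⁻ s in Set.Ioi 0, ENNReal.ofReal (μ s * u1 s) ≤ ENNReal.ofReal C := by
    set g : ℝ → ENNReal := fun x => ENNReal.ofReal (μ x * u1 x) with hgdef
    set f : ℕ → ℝ → ENNReal := fun n => (Set.Ioc (0:ℝ) (n:ℝ)).indicator g with hfdef
    have hmono : ∀ x, Monotone fun n => f n x := by
      intro x n m hnm
      exact Set.indicator_le_indicator_of_subset
        (Set.Ioc_subset_Ioc_right (by exact_mod_cast hnm)) (fun a => zero_le) x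
    have heqae : ∀ᵐ x ∂(volume.restrict (Set.Ioi (0:ℝ))), g x = ⨆ n, f n x := by
      refine (ae_restrict_iff' measurableSet_Ioi).2 (Filter.Eventually.of_forall fun x hx => ?_)
      refine le_antisymm ?_ (iSup_le fun n => Set.indicator_le_self _ _ x)
      have hxmem : x ∈ Set.Ioc (0:ℝ) ((⌈x⌉₊ : ℕ) : ℝ) := ⟨hx, Nat.le_ceil x⟩
      calc g x = f ⌈x⌉₊ x := (Set.indicator_of_mem hxmem g).symm
        _ ≤ ⨆ n, f n x := le_iSup (fun n => f n x) _
    rw [lintegral_congr_ae heqae,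
      lintegral_iSup' (fun n => hgmeas.indicator measurableSet_Ioc)
        (Filter.Eventually.of_forall hmono)]
    refine iSup_le fun n => ?_
    rw [lintegral_indicator measurableSet_Ioc,
      Measure.restrict_restrict measurableSet_Ioc,
      Set.Ioc_inter_Ioi, max_self]
    rw [hgdef]
    rw [← ofReal_integral_eq_lintegral_ofReal (hμu1int n)
      (Filter.Eventually.of_forall fun y => mul_nonneg (hμnonneg y) (hu1nonneg y))]
    exact ENNReal.ofReal_le_ofReal (key n (Nat.cast_nonneg n))
  refine ⟨part1, ?_⟩
  -- part 2
  intro hlim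
  set ε : ℝ := Filter.liminf μ Filter.atTop with hεdef
  have hbddge : Filter.IsBoundedUnder (· ≥ ·) Filter.atTop μ :=
    Filter.isBoundedUnder_of ⟨0, fun x => hμnonneg x⟩
  have hev : ∀ᶠ x in Filter.atTop, ε / 2 < μ x :=
    Filter.eventually_lt_of_lt_liminf (by linarith) hbddge
  obtain ⟨a, ha⟩ := Filter.eventually_atTop.1 hev
  set η : ℝ := max a 0 with hηdef
  have hη0 : (0:ℝ) ≤ η := le_max_right a 0
  have hμη : ∀ x, η < x → ε / 2 < μ x := fun x hx =>
    ha x (le_of_lt (lt_of_le_of_lt (le_max_left a 0) hx))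
  have I1 : IntegrableOn u1 (Set.Ioc 0 η) := hu1int η
  have haesm : AEStronglyMeasurable u1 (volume.restrict (Set.Ioi η)) :=
    (hu1cont.aestronglyMeasurable measurableSet_Ici).mono_measure
      (Measure.restrict_mono (fun x hx => le_of_lt (lt_of_le_of_lt hη0 hx)) le_rfl)
  have hfin : ∫⁻ x in Set.Ioi η, ENNReal.ofReal (u1 x) < ⊤ := by
    have hpt : ∀ᵐ x ∂(volume.restrict (Set.Ioi η)),
        ENNReal.ofReal (u1 x) ≤ ENNReal.ofReal (2 / ε) * ENNReal.ofReal (μ x * u1 x) := by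
      refine (ae_restrict_iff' measurableSet_Ioi).2 (Filter.Eventually.of_forall fun x hx => ?_)
      rw [← ENNReal.ofReal_mul (by positivity)]
      apply ENNReal.ofReal_le_ofReal
      have hμx := hμη x hx
      have hu1x := hu1nonneg x
      have h1' : ε / 2 * u1 x ≤ μ x * u1 x := mul_le_mul_of_nonneg_right hμx.le hu1x
      calc u1 x = 2 / ε * (ε / 2 * u1 x) := by field_simp
        _ ≤ 2 / ε * (μ x * u1 x) := mul_le_mul_of_nonneg_left h1' (by positivity)
    calc ∫⁻ x in Set.Ioi η, ENNReal.ofReal (u1 x)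
        ≤ ∫⁻ x in Set.Ioi η, ENNReal.ofReal (2 / ε) * ENNReal.ofReal (μ x * u1 x) :=
          lintegral_mono_ae hpt
      _ = ENNReal.ofReal (2 / ε) * ∫⁻ x in Set.Ioi η, ENNReal.ofReal (μ x * u1 x) :=
          lintegral_const_mul' _ _ ENNReal.ofReal_ne_top
      _ ≤ ENNReal.ofReal (2 / ε) * ∫⁻ x in Set.Ioi 0, ENNReal.ofReal (μ x * u1 x) :=
          mul_le_mul_right (lintegral_mono_set (Set.Ioi_subset_Ioi hη0)) _
      _ ≤ ENNReal.ofReal (2 / ε) * ENNReal.ofReal C := mul_le_mul_right part1 _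
      _ < ⊤ := ENNReal.mul_lt_top ENNReal.ofReal_lt_top ENNReal.ofReal_lt_top
  have I2 : IntegrableOn u1 (Set.Ioi η) := by
    refine ⟨haesm, ?_⟩
    rw [hasFiniteIntegral_iff_ofReal (Filter.Eventually.of_forall hu1nonneg)]
    exact hfin
  exact (I1.union I2).mono_set fun x hx =>
    (le_or_gt x η).elim (fun h => Or.inl ⟨hx, h⟩) fun h => Or.inr h
end
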